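/- arXiv:2303.05755 — 4 statements merged into one kernel-verified Lean document; each statement's English description precedes it below -/
import Mathlib

section
/- Suppose each f_k is L-smooth and G_{α₀} is strongly convex for some α₀ > 0, and that each f_k is nonnegative. Let {α(t)}_{t≥0} be a non-increasing sequence of positive stepsizes with α(0) ≤ min{(1 + λ_m(W))/L, α₀}. Then the decentralized gradient descent iterates 𝐱(t+1) = 𝐱(t) − ∇G_{α(t)}(𝐱(t)) are uniformly bounded: there exists R > 0 such that ‖𝐱(t)‖ ≤ R for all t ≥ 0. -/
open Finset Set
open scoped RealInnerProductSpace

noncomputable section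

/-- The quadratic penalty `(1/2) 𝐱ᵀ (I − W ⊗ I_n) 𝐱` on the stacked space `ℝ^{nm}`,
where `𝐱 = (x_1, …, x_m)` is indexed by pairs `(k, i)`. -/
def stackedQuad (m n : ℕ) (W : Matrix (Fin m) (Fin m) ℝ)
    (x : EuclideanSpace ℝ (Fin m × Fin n)) : ℝ :=
  (1 / 2) * (‖x‖ ^ 2 - ∑ k : Fin m, ∑ j : Fin m, W k j * ∑ i : Fin n, x (k, i) * x (j, i))

/-- `F(𝐱) = (1/m) ∑ₖ f_k(x_k)` on the stacked space `ℝ^{nm}`. -/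
def stackedF (m n : ℕ) (f : Fin m → EuclideanSpace ℝ (Fin n) → ℝ)
    (x : EuclideanSpace ℝ (Fin m × Fin n)) : ℝ :=
  (1 / (m : ℝ)) * ∑ k : Fin m, f k (WithLp.toLp 2 (fun i => x (k, i)))

/-- `G_α(𝐱) = α F(𝐱) + (1/2) 𝐱ᵀ (I − W ⊗ I_n) 𝐱`. -/
def DGDG (m n : ℕ) (W : Matrix (Fin m) (Fin m) ℝ)
    (f : Fin m → EuclideanSpace ℝ (Fin n) → ℝ) (α : ℝ)
    (x : EuclideanSpace ℝ (Fin m × Fin n)) : ℝ :=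
  α * stackedF m n f x + stackedQuad m n W x

/-- `g` is `μ`-strongly convex: `g − (μ/2)‖·‖²` is convex. -/
def StrongConvexWith {E : Type*} [NormedAddCommGroup E] [InnerProductSpace ℝ E]
    (μ : ℝ) (g : E → ℝ) : Prop :=
  ConvexOn ℝ Set.univ (fun x => g x - μ / 2 * ‖x‖ ^ 2)

section Abstract

variable {E : Type*} [NormedAddCommGroup E] [InnerProductSpace ℝ E] [CompleteSpace E]

lemma le_of_sq_le_sq' {a b : ℝ} (hb : 0 ≤ b) (h : a ^ 2 ≤ b ^ 2) (ha : 0 ≤ a) : a ≤ b := by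
  nlinarith

/-- Fréchet derivative of a symmetric quadratic form. -/
lemma quadform_hasFDerivAt (T : E → E)
    (hadd : ∀ u v, T (u + v) = T u + T v)
    (hsym : ∀ u v, ⟪T u, v⟫ = ⟪u, T v⟫)
    (C : ℝ) (hbnd : ∀ v, ‖T v‖ ≤ C * ‖v‖) (x : E) :
    HasFDerivAt (fun y => ⟪T y, y⟫) (innerSL ℝ ((2:ℝ) • T x)) x := by
  rw [hasFDerivAt_iff_isLittleO_nhds_zero]
  have key : ∀ h : E, ⟪T (x + h), x + h⟫ - ⟪T x, x⟫ - ⟪(2:ℝ) • T x, h⟫ = ⟪T h, h⟫ := by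
    intro h
    have h2 : ⟪T h, x⟫ = ⟪T x, h⟫ := by rw [hsym h x, real_inner_comm]
    rw [hadd, inner_add_left, inner_add_right, inner_add_right, real_inner_smul_left]
    linarith [h2]
  set D : ℝ := max C 0 with hD
  have hD0 : 0 ≤ D := le_max_right _ _
  have hbound : ∀ h : E, |⟪T h, h⟫| ≤ D * ‖h‖ * ‖h‖ := by
    intro h
    have h1 : ‖T h‖ ≤ D * ‖h‖ := le_trans (hbnd h)
      (mul_le_mul_of_nonneg_right (le_max_left _ _) (norm_nonneg h))
    calc |⟪T h, h⟫| ≤ ‖T h‖ * ‖h‖ := abs_real_inner_le_norm _ _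
      _ ≤ D * ‖h‖ * ‖h‖ := mul_le_mul_of_nonneg_right h1 (norm_nonneg h)
  rw [Asymptotics.isLittleO_iff]
  intro c hc
  have hmem : ∀ᶠ h : E in nhds 0, ‖h‖ ≤ c / (D + 1) := by
    have : Metric.closedBall (0 : E) (c / (D + 1)) ∈ nhds (0 : E) :=
      Metric.closedBall_mem_nhds 0 (by positivity)
    filter_upwards [this] with h hh
    simpa [Metric.mem_closedBall, dist_zero_right] using hh
  filter_upwards [hmem] with h hh
  have hnn : 0 ≤ ‖h‖ := norm_nonneg h
  have h1 : D * ‖h‖ ≤ c := by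
    have : D * ‖h‖ ≤ D * (c / (D + 1)) := mul_le_mul_of_nonneg_left hh hD0
    have h2 : D * (c / (D + 1)) ≤ c := by
      rw [div_eq_mul_inv]
      rw [show D * (c * (D+1)⁻¹) = (D * c) * (D+1)⁻¹ by ring]
      rw [mul_inv_le_iff₀ (by positivity)]
      nlinarith
    linarith
  calc ‖⟪T (x + h), x + h⟫ - ⟪T x, x⟫ - (innerSL ℝ ((2:ℝ) • T x)) h‖
      = |⟪T h, h⟫| := by rw [innerSL_apply_apply, Real.norm_eq_abs, key h]
    _ ≤ D * ‖h‖ * ‖h‖ := hbound h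
    _ ≤ c * ‖h‖ := mul_le_mul_of_nonneg_right h1 hnn

/-- Convexity of a nonnegative symmetric quadratic form. -/
lemma quadform_convexOn (T : E → E)
    (hadd : ∀ u v, T (u + v) = T u + T v)
    (hsmul : ∀ (c : ℝ) u, T (c • u) = c • T u)
    (hsym : ∀ u v, ⟪T u, v⟫ = ⟪u, T v⟫)
    (hpos : ∀ v, 0 ≤ ⟪T v, v⟫) :
    ConvexOn ℝ Set.univ (fun x => ⟪T x, x⟫) := by
  refine ⟨convex_univ, fun x _ y _ a b ha hb hab => ?_⟩
  have h2 : ⟪T y, x⟫ = ⟪T x, y⟫ := by rw [hsym y x, real_inner_comm]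
  have expand : ⟪T (a • x + b • y), a • x + b • y⟫
      = a^2 * ⟪T x, x⟫ + 2*(a*b) * ⟪T x, y⟫ + b^2 * ⟪T y, y⟫ := by
    rw [hadd, hsmul, hsmul]
    simp only [inner_add_left, inner_add_right, real_inner_smul_left, real_inner_smul_right, h2]
    ring
  have hxy : 0 ≤ ⟪T (x - y), x - y⟫ := hpos _
  have expand2 : ⟪T (x - y), x - y⟫ = ⟪T x, x⟫ - 2 * ⟪T x, y⟫ + ⟪T y, y⟫ := by
    have hs : x - y = x + (-1 : ℝ) • y := by simp [sub_eq_add_neg]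
    rw [hs, hadd, hsmul]
    simp only [inner_add_left, inner_add_right, real_inner_smul_left, real_inner_smul_right, h2]
    ring
  simp only [smul_eq_mul]
  rw [expand]
  have hb' : b = 1 - a := by linarith
  subst hb'
  have h4 : 0 ≤ a * (1-a) * (⟪T x, x⟫ - 2 * ⟪T x, y⟫ + ⟪T y, y⟫) :=
    mul_nonneg (mul_nonneg ha (by linarith)) (by rw [← expand2]; exact hxy)
  nlinarith [h4]

end Abstract

section Abstract2

variable {E : Type*} [NormedAddCommGroup E] [InnerProductSpace ℝ E] [CompleteSpace E]

/-- Derivative of `t ↦ g (x + t • v)`. -/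
lemma path_hasDerivAt {g : E → ℝ} {G' : E → E}
    (hg : ∀ y, HasFDerivAt g (innerSL ℝ (G' y)) y) (x v : E) (t : ℝ) :
    HasDerivAt (fun s : ℝ => g (x + s • v)) ⟪G' (x + t • v), v⟫ t := by
  have hpath : HasDerivAt (fun s : ℝ => x + s • v) v t := by
    simpa using ((hasDerivAt_id t).smul_const v).const_add x
  have := (hg (x + t • v)).comp_hasDerivAt t hpath
  simp only [innerSL_apply_apply] at this
  exact this

/-- Descent lemma: quadratic upper bound for a function with Lipschitz gradient. -/
lemma descent_lemma {g : E → ℝ} {G' : E → E} {K : ℝ}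
    (hg : ∀ y, HasFDerivAt g (innerSL ℝ (G' y)) y)
    (hK : 0 ≤ K)
    (hLip : ∀ u v, ‖G' u - G' v‖ ≤ K * ‖u - v‖) (x y : E) :
    g y ≤ g x + ⟪G' x, y - x⟫ + K / 2 * ‖y - x‖ ^ 2 := by
  set v := y - x with hv
  have hGcont : Continuous G' := by
    have : LipschitzWith (Real.toNNReal K) G' := by
      apply LipschitzWith.of_dist_le_mul
      intro a b
      rw [dist_eq_norm, dist_eq_norm]
      calc ‖G' a - G' b‖ ≤ K * ‖a - b‖ := hLip a b
        _ ≤ Real.toNNReal K * ‖a - b‖ := by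
            exact mul_le_mul_of_nonneg_right (Real.le_coe_toNNReal K) (norm_nonneg _)
    exact this.continuous
  have hderiv : ∀ t ∈ uIcc (0:ℝ) 1,
      HasDerivAt (fun s : ℝ => g (x + s • v)) ⟪G' (x + t • v), v⟫ t :=
    fun t _ => path_hasDerivAt hg x v t
  have hcont : Continuous (fun t : ℝ => ⟪G' (x + t • v), v⟫) := by
    apply Continuous.inner
    · exact hGcont.comp (continuous_const.add (continuous_id.smul continuous_const))
    · exact continuous_const
  have hint : IntervalIntegrable (fun t : ℝ => ⟪G' (x + t • v), v⟫)
      MeasureTheory.volume 0 1 := hcont.intervalIntegrable 0 1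
  have hFTC : g (x + (1:ℝ) • v) - g (x + (0:ℝ) • v)
      = ∫ t in (0:ℝ)..1, ⟪G' (x + t • v), v⟫ :=
    (intervalIntegral.integral_eq_sub_of_hasDerivAt hderiv hint).symm
  have hxy : x + (1:ℝ) • v = y := by rw [one_smul, hv]; abel
  have hx0 : x + (0:ℝ) • v = x := by rw [zero_smul, add_zero]
  rw [hxy, hx0] at hFTC
  have hmono : ∫ t in (0:ℝ)..1, ⟪G' (x + t • v), v⟫
      ≤ ∫ t in (0:ℝ)..1, (⟪G' x, v⟫ + K * t * ‖v‖ ^ 2) := by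
    apply intervalIntegral.integral_mono_on (by norm_num)
    · exact hint
    · exact Continuous.intervalIntegrable (by fun_prop) 0 1
    · intro t ht
      obtain ⟨ht0, ht1⟩ := ht
      have hdiff : ⟪G' (x + t • v), v⟫ - ⟪G' x, v⟫ = ⟪G' (x + t • v) - G' x, v⟫ := by
        rw [inner_sub_left]
      have : ⟪G' (x + t • v) - G' x, v⟫ ≤ K * t * ‖v‖ ^ 2 := by
        calc ⟪G' (x + t • v) - G' x, v⟫ ≤ ‖G' (x + t • v) - G' x‖ * ‖v‖ :=
              real_inner_le_norm _ _
          _ ≤ (K * ‖(x + t • v) - x‖) * ‖v‖ :=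
              mul_le_mul_of_nonneg_right (hLip _ _) (norm_nonneg v)
          _ = K * t * ‖v‖ ^ 2 := by
              rw [add_sub_cancel_left, norm_smul, Real.norm_eq_abs, abs_of_nonneg ht0]; ring
      linarith
  have hi1 : IntervalIntegrable (fun _ : ℝ => ⟪G' x, v⟫) MeasureTheory.volume 0 1 :=
    (continuous_const).intervalIntegrable 0 1
  have hi2 : IntervalIntegrable (fun t : ℝ => K * t * ‖v‖ ^ 2) MeasureTheory.volume 0 1 :=
    Continuous.intervalIntegrable (by fun_prop) 0 1
  have hval : ∫ t in (0:ℝ)..1, (⟪G' x, v⟫ + K * t * ‖v‖ ^ 2)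
      = ⟪G' x, v⟫ + K / 2 * ‖v‖ ^ 2 := by
    rw [intervalIntegral.integral_add hi1 hi2]
    simp only [intervalIntegral.integral_const, smul_eq_mul]
    have : ∫ t in (0:ℝ)..1, K * t * ‖v‖ ^ 2 = K / 2 * ‖v‖ ^ 2 := by
      have hfun : (fun t : ℝ => K * t * ‖v‖ ^ 2) = fun t : ℝ => (K * ‖v‖ ^ 2) * t := by
        funext t; ring
      rw [hfun, intervalIntegral.integral_const_mul, integral_id]
      ring
    rw [this]; ring
  linarith

/-- First-order lower bound for differentiable convex functions. -/
lemma convex_lower {g : E → ℝ} {G' : E → E}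
    (hg : ∀ y, HasFDerivAt g (innerSL ℝ (G' y)) y)
    (hconv : ConvexOn ℝ Set.univ g) (x y : E) :
    g x + ⟪G' x, y - x⟫ ≤ g y := by
  set v := y - x with hv
  set φ : ℝ → ℝ := fun s => g (x + s • v) with hφ
  have hder : HasDerivAt φ ⟪G' x, v⟫ 0 := by
    have := path_hasDerivAt hg x v 0
    simpa [hφ] using this
  have hslope : Filter.Tendsto (slope φ 0) (nhdsWithin 0 (Set.Ioi (0:ℝ))) (nhds ⟪G' x, v⟫) := by
    have := hasDerivAt_iff_tendsto_slope.mp hder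
    exact this.mono_left (nhdsWithin_mono 0 (fun t ht => by
      simp only [Set.mem_compl_iff, Set.mem_singleton_iff]
      exact ne_of_gt ht))
  have hbound : ∀ᶠ t in nhdsWithin 0 (Set.Ioi (0:ℝ)), slope φ 0 t ≤ g y - g x := by
    filter_upwards [Ioo_mem_nhdsGT_of_mem (Set.left_mem_Ico.mpr one_pos)] with t ht
    obtain ⟨ht0, ht1⟩ := ht
    have hcomb : x + t • v = (1 - t) • x + t • y := by
      rw [hv]; rw [smul_sub, sub_smul, one_smul]; abel
    have hle : φ t ≤ (1 - t) * g x + t * g y := by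
      rw [hφ]; simp only; rw [hcomb]
      have := hconv.2 (Set.mem_univ x) (Set.mem_univ y)
        (by linarith : (0:ℝ) ≤ 1 - t) (le_of_lt ht0) (by ring)
      simpa [smul_eq_mul] using this
    rw [slope_def_field]
    have hφ0 : φ 0 = g x := by rw [hφ]; simp
    rw [hφ0, sub_zero, div_le_iff₀ ht0]
    nlinarith [hle]
  have := le_of_tendsto hslope hbound
  linarith

/-- Baillon–Haddad / cocoercivity at a pair of points. -/
lemma baillon_haddad {g : E → ℝ} {G' : E → E} {K : ℝ}
    (hg : ∀ y, HasFDerivAt g (innerSL ℝ (G' y)) y)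
    (hK : 0 ≤ K)
    (hLip : ∀ u v, ‖G' u - G' v‖ ≤ K * ‖u - v‖)
    (hconv : ConvexOn ℝ Set.univ g) (x z : E) :
    ‖G' x - G' z‖ ^ 2 ≤ K * ⟪G' x - G' z, x - z⟫ := by
  rcases eq_or_lt_of_le hK with hK0 | hKpos
  · have h0 : G' x = G' z := by
      have := hLip x z
      rw [← hK0] at this
      simp only [zero_mul] at this
      have := le_antisymm this (norm_nonneg _)
      rwa [norm_eq_zero, sub_eq_zero] at this
    simp [h0]
  · have key : ∀ u w : E, g u + ⟪G' u, w - u⟫ + 1/(2*K) * ‖G' w - G' u‖^2 ≤ g w := by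
      intro u w
      set δ := G' w - G' u with hδ
      set p := w - (K⁻¹) • δ with hp
      have h1 : g p ≤ g w + ⟪G' w, p - w⟫ + K / 2 * ‖p - w‖ ^ 2 :=
        descent_lemma hg hK hLip w p
      have h2 : g u + ⟪G' u, p - u⟫ ≤ g p := convex_lower hg hconv u p
      have hpw : p - w = -(K⁻¹ • δ) := by rw [hp]; abel
      have hnorm : ‖p - w‖^2 = K⁻¹^2 * ‖δ‖^2 := by
        rw [hpw, norm_neg, norm_smul, Real.norm_eq_abs, abs_of_nonneg (inv_nonneg.mpr hK),
          mul_pow]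
      have hinner1 : ⟪G' w, p - w⟫ = -K⁻¹ * ⟪G' w, δ⟫ := by
        rw [hpw, inner_neg_right, real_inner_smul_right]; ring
      have hinner2 : ⟪G' u, p - u⟫ = ⟪G' u, w - u⟫ - K⁻¹ * ⟪G' u, δ⟫ := by
        have : p - u = (w - u) - K⁻¹ • δ := by rw [hp]; abel
        rw [this, inner_sub_right, real_inner_smul_right]
      have hδδ : ⟪G' w, δ⟫ - ⟪G' u, δ⟫ = ‖δ‖^2 := by
        rw [← inner_sub_left, ← hδ, real_inner_self_eq_norm_sq]
      have hKne : (K : ℝ) ≠ 0 := ne_of_gt hKpos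
      -- combine h1 h2
      rw [hinner1, hnorm] at h1
      rw [hinner2] at h2
      have e1 : K / 2 * (K⁻¹^2 * ‖δ‖^2) = 1/(2*K) * ‖δ‖^2 := by
        field_simp
      rw [e1] at h1
      have e4 : K⁻¹ * ⟪G' w, δ⟫ - K⁻¹ * ⟪G' u, δ⟫ = 2 * (1/(2*K) * ‖δ‖^2) := by
        rw [← mul_sub, hδδ]; field_simp
      linarith [h1, h2, e4]
    have k1 := key x z
    have k2 := key z x
    have hnormsym : ‖G' x - G' z‖ = ‖G' z - G' x‖ := by rw [norm_sub_rev]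
    have hinner : ⟪G' x, z - x⟫ + ⟪G' z, x - z⟫ = -⟪G' x - G' z, x - z⟫ := by
      have h1 : ⟪G' x, z - x⟫ = -⟪G' x, x - z⟫ := by
        rw [← inner_neg_right]; congr 1; abel
      rw [h1, inner_sub_left]; ring
    have h2K : 0 < 2 * K := by linarith
    have := add_le_add k1 k2
    rw [hnormsym] at this
    have hsum : 1/(2*K) * ‖G' z - G' x‖^2 + 1/(2*K) * ‖G' z - G' x‖^2
        = (1/K) * ‖G' z - G' x‖^2 := by field_simp; ring
    -- this : g x + ⟪G' x, z - x⟫ + c + g z + ⟪G' z, x - z⟫ + c ≤ g z + g x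
    have hres : (1/K) * ‖G' z - G' x‖^2 ≤ ⟪G' x - G' z, x - z⟫ := by
      linarith [this, hinner, hsum]
    rw [← hnormsym] at hres
    calc ‖G' x - G' z‖^2 = K * ((1/K) * ‖G' x - G' z‖^2) := by field_simp
      _ ≤ K * ⟪G' x - G' z, x - z⟫ := mul_le_mul_of_nonneg_left hres hK

end Abstract2

section Abstract3

variable {E : Type*} [NormedAddCommGroup E] [InnerProductSpace ℝ E] [CompleteSpace E]

/-- Gradient-step contraction for a strongly convex function with Lipschitz gradient. -/
lemma step_contraction {g : E → ℝ} {G' : E → E} {K σ : ℝ}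
    (hg : ∀ y, HasFDerivAt g (innerSL ℝ (G' y)) y)
    (hK : 0 ≤ K) (hσ : 0 ≤ σ)
    (hLip : ∀ u v, ‖G' u - G' v‖ ≤ K * ‖u - v‖)
    (hψconv : ConvexOn ℝ Set.univ (fun y => g y - σ / 2 * ‖y‖ ^ 2))
    (hcond : K + 3 * σ ≤ 2) (x z : E) :
    ‖(x - G' x) - (z - G' z)‖ ≤ (1 - σ) * ‖x - z‖ := by
  set ψ : E → ℝ := fun y => g y - σ / 2 * ‖y‖ ^ 2 with hψ
  set Ψ : E → E := fun y => G' y - σ • y with hΨ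
  -- derivative of ψ
  have hψderiv : ∀ y, HasFDerivAt ψ (innerSL ℝ (Ψ y)) y := by
    intro y
    have hT : HasFDerivAt (fun w : E => ⟪(fun u : E => (σ/2) • u) w, w⟫)
        (innerSL ℝ ((2:ℝ) • (σ/2) • y)) y := by
      apply quadform_hasFDerivAt (fun u : E => (σ/2) • u)
        (fun u v => smul_add _ u v)
        (fun u v => by rw [real_inner_smul_left, real_inner_smul_right]) (σ/2)
      intro v
      rw [norm_smul, Real.norm_eq_abs, abs_of_nonneg (by linarith : (0:ℝ) ≤ σ/2)]
    have hq : HasFDerivAt (fun w : E => σ / 2 * ‖w‖ ^ 2) (innerSL ℝ (σ • y)) y := by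
      have hfun : (fun w : E => σ / 2 * ‖w‖ ^ 2) = fun w : E => ⟪(σ/2) • w, w⟫ := by
        funext w
        rw [real_inner_smul_left, real_inner_self_eq_norm_sq]
      rw [hfun]
      have h2 : (2:ℝ) • (σ/2) • y = σ • y := by
        rw [smul_smul]; congr 1; ring
      rw [← h2]
      exact hT
    have := (hg y).sub hq
    have heq : innerSL ℝ (G' y) - innerSL ℝ (σ • y) = innerSL ℝ (Ψ y) := by
      ext w
      simp only [ContinuousLinearMap.coe_sub', Pi.sub_apply, innerSL_apply_apply, hΨ]
      rw [inner_sub_left]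
    rwa [heq] at this
  have hψLip : ∀ u v, ‖Ψ u - Ψ v‖ ≤ (K + σ) * ‖u - v‖ := by
    intro u v
    have : Ψ u - Ψ v = (G' u - G' v) - σ • (u - v) := by
      simp only [hΨ, smul_sub]; abel
    rw [this]
    calc ‖(G' u - G' v) - σ • (u - v)‖ ≤ ‖G' u - G' v‖ + ‖σ • (u - v)‖ := norm_sub_le _ _
      _ ≤ K * ‖u - v‖ + σ * ‖u - v‖ := by
          apply add_le_add (hLip u v)
          rw [norm_smul, Real.norm_eq_abs, abs_of_nonneg hσ]
      _ = (K + σ) * ‖u - v‖ := by ring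
  have hBH : ‖Ψ x - Ψ z‖ ^ 2 ≤ (K + σ) * ⟪Ψ x - Ψ z, x - z⟫ :=
    baillon_haddad hψderiv (by linarith) hψLip hψconv x z
  have hmono : 0 ≤ ⟪Ψ x - Ψ z, x - z⟫ := by
    have l1 := convex_lower hψderiv hψconv x z
    have l2 := convex_lower hψderiv hψconv z x
    have e1 : ⟪Ψ z, x - z⟫ = -⟪Ψ z, z - x⟫ := by
      rw [← inner_neg_right]; congr 1; abel
    have e0 : ⟪Ψ x, z - x⟫ = -⟪Ψ x, x - z⟫ := by
      rw [← inner_neg_right]; congr 1; abel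
    rw [inner_sub_left]
    linarith [l1, l2, e1, e0]
  -- main computation
  set d := x - z with hd
  set D := Ψ x - Ψ z with hD
  have hvec : (x - G' x) - (z - G' z) = (1 - σ) • d - D := by
    simp only [hD, hΨ, hd, sub_smul, one_smul, smul_sub]
    abel
  have hσ23 : σ ≤ 2/3 := by linarith
  have hnormsq : ‖(1 - σ) • d - D‖ ^ 2 ≤ ((1 - σ) * ‖d‖) ^ 2 := by
    rw [norm_sub_sq_real]
    rw [norm_smul, Real.norm_eq_abs, abs_of_nonneg (by linarith : (0:ℝ) ≤ 1 - σ)]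
    rw [real_inner_smul_left]
    have hcoef : (K + σ) - 2 * (1 - σ) ≤ 0 := by linarith
    have : ‖D‖ ^ 2 ≤ 2 * (1 - σ) * ⟪D, d⟫ := by
      calc ‖D‖ ^ 2 ≤ (K + σ) * ⟪D, d⟫ := hBH
        _ ≤ 2 * (1 - σ) * ⟪D, d⟫ := by nlinarith [hmono, hcoef]
    nlinarith [this, real_inner_comm d D]
  rw [hvec]
  exact le_of_sq_le_sq' (mul_nonneg (by linarith) (norm_nonneg d)) hnormsq (norm_nonneg _)

end Abstract3


section Concrete

variable {m n : ℕ}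

lemma eu_sub_apply {ι : Type*} [Fintype ι] (u v : EuclideanSpace ℝ ι) (i : ι) :
    (u - v) i = u i - v i := rfl

lemma eu_add_apply {ι : Type*} [Fintype ι] (u v : EuclideanSpace ℝ ι) (i : ι) :
    (u + v) i = u i + v i := rfl

lemma eu_smul_apply {ι : Type*} [Fintype ι] (c : ℝ) (u : EuclideanSpace ℝ ι) (i : ι) :
    (c • u) i = c * u i := rfl

lemma inner_eu {ι : Type*} [Fintype ι] (u v : EuclideanSpace ℝ ι) :
    ⟪u, v⟫ = ∑ i, u i * v i := by
  rw [PiLp.inner_apply]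
  simp [RCLike.inner_apply]
  exact Finset.sum_congr rfl fun i _ => mul_comm _ _

lemma normsq_eu {ι : Type*} [Fintype ι] (u : EuclideanSpace ℝ ι) :
    ‖u‖ ^ 2 = ∑ i, u i * u i := by
  rw [← real_inner_self_eq_norm_sq, inner_eu]

/-- The operator `W ⊗ I`. -/
def wop (W : Matrix (Fin m) (Fin m) ℝ) (x : EuclideanSpace ℝ (Fin m × Fin n)) :
    EuclideanSpace ℝ (Fin m × Fin n) :=
  WithLp.toLp 2 (fun p : Fin m × Fin n => ∑ j, W p.1 j * x (j, p.2))

lemma wop_add (W : Matrix (Fin m) (Fin m) ℝ) (u v : EuclideanSpace ℝ (Fin m × Fin n)) :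
    wop W (u + v) = wop W u + wop W v := by
  ext p
  simp only [wop, PiLp.toLp_apply, eu_add_apply, mul_add, Finset.sum_add_distrib]

lemma wop_smul (W : Matrix (Fin m) (Fin m) ℝ) (c : ℝ) (u : EuclideanSpace ℝ (Fin m × Fin n)) :
    wop W (c • u) = c • wop W u := by
  ext p
  simp only [wop, PiLp.toLp_apply, eu_smul_apply, Finset.mul_sum]
  congr 1; funext j; ring

lemma wop_inner (W : Matrix (Fin m) (Fin m) ℝ) (x y : EuclideanSpace ℝ (Fin m × Fin n)) :
    ⟪wop W x, y⟫ = ∑ k, ∑ j, W k j * ∑ i, x (j, i) * y (k, i) := by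
  rw [inner_eu, Fintype.sum_prod_type]
  refine Finset.sum_congr rfl fun k _ => ?_
  calc ∑ i, wop W x (k, i) * y (k, i)
      = ∑ i, ∑ j, W k j * x (j, i) * y (k, i) := by
        refine Finset.sum_congr rfl fun i _ => ?_
        rw [wop, PiLp.toLp_apply, Finset.sum_mul]
    _ = ∑ j, ∑ i, W k j * x (j, i) * y (k, i) := Finset.sum_comm
    _ = ∑ j, W k j * ∑ i, x (j, i) * y (k, i) := by
        refine Finset.sum_congr rfl fun j _ => ?_
        rw [Finset.mul_sum]
        refine Finset.sum_congr rfl fun i _ => ?_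
        ring

lemma wop_quadform (W : Matrix (Fin m) (Fin m) ℝ) (x : EuclideanSpace ℝ (Fin m × Fin n)) :
    ⟪wop W x, x⟫ = ∑ k, ∑ j, W k j * ∑ i, x (k, i) * x (j, i) := by
  rw [wop_inner]
  refine Finset.sum_congr rfl fun k _ => Finset.sum_congr rfl fun j _ => ?_
  congr 1
  refine Finset.sum_congr rfl fun i _ => mul_comm _ _

lemma wop_sa (W : Matrix (Fin m) (Fin m) ℝ) (hWsymm : W.IsSymm)
    (x y : EuclideanSpace ℝ (Fin m × Fin n)) :
    ⟪wop W x, y⟫ = ⟪x, wop W y⟫ := by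
  rw [real_inner_comm (wop W y) x, wop_inner, wop_inner, Finset.sum_comm]
  refine Finset.sum_congr rfl fun j _ => Finset.sum_congr rfl fun k _ => ?_
  rw [hWsymm.apply k j]
  congr 1
  refine Finset.sum_congr rfl fun i _ => mul_comm _ _

lemma wop_norm_le (W : Matrix (Fin m) (Fin m) ℝ) (hWsymm : W.IsSymm)
    (hWnonneg : ∀ i j, 0 ≤ W i j) (hWrow : ∀ i, ∑ j, W i j = 1)
    (x : EuclideanSpace ℝ (Fin m × Fin n)) :
    ‖wop W x‖ ≤ ‖x‖ := by
  have hsq : ‖wop W x‖ ^ 2 ≤ ‖x‖ ^ 2 := by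
    rw [normsq_eu, normsq_eu]
    have hpt : ∀ p : Fin m × Fin n,
        wop W x p * wop W x p ≤ ∑ j, W p.1 j * (x (j, p.2) * x (j, p.2)) := by
      intro p
      have hCS := Finset.sum_mul_sq_le_sq_mul_sq Finset.univ
        (fun j => Real.sqrt (W p.1 j)) (fun j => Real.sqrt (W p.1 j) * x (j, p.2))
      have h1 : ∀ j, Real.sqrt (W p.1 j) * (Real.sqrt (W p.1 j) * x (j, p.2))
          = W p.1 j * x (j, p.2) := by
        intro j
        rw [← mul_assoc, Real.mul_self_sqrt (hWnonneg p.1 j)]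
      have h2 : ∀ j, Real.sqrt (W p.1 j) ^ 2 = W p.1 j := fun j =>
        Real.sq_sqrt (hWnonneg p.1 j)
      have h3 : ∀ j, (Real.sqrt (W p.1 j) * x (j, p.2)) ^ 2
          = W p.1 j * (x (j, p.2) * x (j, p.2)) := by
        intro j
        rw [mul_pow, h2 j]; ring
      simp only [h1, h2, h3] at hCS
      rw [hWrow p.1, one_mul] at hCS
      calc wop W x p * wop W x p = (∑ j, W p.1 j * x (j, p.2)) ^ 2 := by rw [wop, PiLp.toLp_apply]; ring
        _ ≤ ∑ j, W p.1 j * (x (j, p.2) * x (j, p.2)) := hCS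
    have hcol : ∀ j, ∑ k, W k j = 1 := by
      intro j
      calc ∑ k, W k j = ∑ k, W j k := Finset.sum_congr rfl fun k _ => by
            rw [← hWsymm.apply k j]
        _ = 1 := hWrow j
    calc ∑ p : Fin m × Fin n, wop W x p * wop W x p
        ≤ ∑ p : Fin m × Fin n, ∑ j, W p.1 j * (x (j, p.2) * x (j, p.2)) :=
          Finset.sum_le_sum fun p _ => hpt p
      _ = ∑ k : Fin m, ∑ i : Fin n, ∑ j : Fin m, W k j * (x (j, i) * x (j, i)) := by
          rw [Fintype.sum_prod_type]
      _ = ∑ k : Fin m, ∑ j : Fin m, ∑ i : Fin n, W k j * (x (j, i) * x (j, i)) :=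
          Finset.sum_congr rfl fun k _ => Finset.sum_comm
      _ = ∑ j : Fin m, ∑ k : Fin m, ∑ i : Fin n, W k j * (x (j, i) * x (j, i)) :=
          Finset.sum_comm
      _ = ∑ j : Fin m, ∑ i : Fin n, x (j, i) * x (j, i) := by
          refine Finset.sum_congr rfl fun j _ => ?_
          calc ∑ k : Fin m, ∑ i : Fin n, W k j * (x (j, i) * x (j, i))
              = ∑ i : Fin n, ∑ k : Fin m, W k j * (x (j, i) * x (j, i)) := Finset.sum_comm
            _ = ∑ i : Fin n, x (j, i) * x (j, i) := by
                refine Finset.sum_congr rfl fun i _ => ?_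
                rw [← Finset.sum_mul, hcol j, one_mul]
      _ = ∑ p : Fin m × Fin n, x p * x p := by rw [Fintype.sum_prod_type]
  exact le_of_sq_le_sq' (norm_nonneg x) hsq (norm_nonneg _)

end Concrete

section Concrete2

variable {m n : ℕ}

lemma aop_psd (W : Matrix (Fin m) (Fin m) ℝ) (hWsymm : W.IsSymm)
    (hWnonneg : ∀ i j, 0 ≤ W i j) (hWrow : ∀ i, ∑ j, W i j = 1)
    (x : EuclideanSpace ℝ (Fin m × Fin n)) :
    0 ≤ ⟪x - wop W x, x⟫ := by
  rw [inner_sub_left]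
  have h1 : ⟪wop W x, x⟫ ≤ ‖wop W x‖ * ‖x‖ := real_inner_le_norm _ _
  have h2 : ‖wop W x‖ * ‖x‖ ≤ ‖x‖ * ‖x‖ :=
    mul_le_mul_of_nonneg_right (wop_norm_le W hWsymm hWnonneg hWrow x) (norm_nonneg x)
  have h3 : ⟪x, x⟫ = ‖x‖ * ‖x‖ := real_inner_self_eq_norm_mul_norm x
  linarith

lemma aop_ub (W : Matrix (Fin m) (Fin m) ℝ) {lam : ℝ}
    (hlam : ∀ u : EuclideanSpace ℝ (Fin m × Fin n),
      lam * ‖u‖ ^ 2 ≤ ∑ k : Fin m, ∑ j : Fin m, W k j * ∑ i : Fin n, u (k, i) * u (j, i))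
    (x : EuclideanSpace ℝ (Fin m × Fin n)) :
    ⟪x - wop W x, x⟫ ≤ (1 - lam) * ‖x‖ ^ 2 := by
  rw [inner_sub_left]
  have h1 : lam * ‖x‖ ^ 2 ≤ ⟪wop W x, x⟫ := by rw [wop_quadform]; exact hlam x
  have h3 : ⟪x, x⟫ = ‖x‖ ^ 2 := real_inner_self_eq_norm_sq x
  linarith

lemma aop_sub (W : Matrix (Fin m) (Fin m) ℝ) (u v : EuclideanSpace ℝ (Fin m × Fin n)) :
    (u - wop W u) - (v - wop W v) = (u - v) - wop W (u - v) := by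
  have : wop W (u - v) = wop W u - wop W v := by
    have h1 : u - v = u + (-1 : ℝ) • v := by
      ext p
      rw [eu_sub_apply, eu_add_apply, eu_smul_apply]; ring
    rw [h1, wop_add, wop_smul]
    ext p
    rw [eu_add_apply, eu_smul_apply, eu_sub_apply]; ring
  rw [this]
  abel

/-- Cauchy–Schwarz for the PSD form of `A = I - W ⊗ I`, leading to the operator norm bound. -/
lemma aop_norm_le (W : Matrix (Fin m) (Fin m) ℝ) (hWsymm : W.IsSymm)
    (hWnonneg : ∀ i j, 0 ≤ W i j) (hWrow : ∀ i, ∑ j, W i j = 1) {lam : ℝ} (hlam1 : lam ≤ 1)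
    (hlam : ∀ u : EuclideanSpace ℝ (Fin m × Fin n),
      lam * ‖u‖ ^ 2 ≤ ∑ k : Fin m, ∑ j : Fin m, W k j * ∑ i : Fin n, u (k, i) * u (j, i))
    (x : EuclideanSpace ℝ (Fin m × Fin n)) :
    ‖x - wop W x‖ ≤ (1 - lam) * ‖x‖ := by
  set A : EuclideanSpace ℝ (Fin m × Fin n) → EuclideanSpace ℝ (Fin m × Fin n) :=
    fun v => v - wop W v with hA
  have hAadd : ∀ u v, A (u + v) = A u + A v := by
    intro u v
    simp only [hA, wop_add]
    abel
  have hAsmul : ∀ (c : ℝ) u, A (c • u) = c • A u := by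
    intro c u
    simp only [hA, wop_smul, smul_sub]
  have hAsym : ∀ u v, ⟪A u, v⟫ = ⟪u, A v⟫ := by
    intro u v
    simp only [hA, inner_sub_left, inner_sub_right]
    rw [wop_sa W hWsymm]
  have hApsd : ∀ v, 0 ≤ ⟪A v, v⟫ := fun v => aop_psd W hWsymm hWnonneg hWrow v
  have hAub : ∀ v, ⟪A v, v⟫ ≤ (1 - lam) * ‖v‖ ^ 2 := fun v => aop_ub W hlam v
  -- Cauchy-Schwarz for the PSD bilinear form
  have hCS : ∀ u v, ⟪A u, v⟫ ^ 2 ≤ ⟪A u, u⟫ * ⟪A v, v⟫ := by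
    intro u v
    have hquad : ∀ t : ℝ, 0 ≤ ⟪A u, u⟫ * (t * t) + (2 * ⟪A u, v⟫) * t + ⟪A v, v⟫ := by
      intro t
      have := hApsd (t • u + v)
      have hexp : ⟪A (t • u + v), t • u + v⟫
          = ⟪A u, u⟫ * (t * t) + (2 * ⟪A u, v⟫) * t + ⟪A v, v⟫ := by
        rw [hAadd, hAsmul]
        have hvu : ⟪A v, u⟫ = ⟪A u, v⟫ := by
          rw [hAsym v u, real_inner_comm]
        simp only [inner_add_left, inner_add_right, real_inner_smul_left,
          real_inner_smul_right, hvu]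
        ring
      linarith [hexp ▸ this]
    have hd := discrim_le_zero hquad
    rw [discrim] at hd
    nlinarith [hd]
  rcases eq_or_ne (A x) 0 with h0 | h0
  · have h0' : x - wop W x = 0 := h0
    rw [h0', norm_zero]
    have := norm_nonneg x
    nlinarith
  · have hAx : 0 < ‖A x‖ := norm_pos_iff.mpr h0
    have key := hCS x (A x)
    have h1 : ⟪A x, A x⟫ = ‖A x‖ ^ 2 := real_inner_self_eq_norm_sq _
    have h2 : ⟪A (A x), A x⟫ ≤ (1 - lam) * ‖A x‖ ^ 2 := hAub (A x)
    have h2' : ⟪A x, A x⟫ ^ 2 ≤ ⟪A x, x⟫ * ((1 - lam) * ‖A x‖ ^ 2) := by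
      have h0' : 0 ≤ ⟪A x, x⟫ := hApsd x
      calc ⟪A x, A x⟫ ^ 2 ≤ ⟪A x, x⟫ * ⟪A (A x), A x⟫ := hCS x (A x)
        _ ≤ ⟪A x, x⟫ * ((1 - lam) * ‖A x‖ ^ 2) :=
            mul_le_mul_of_nonneg_left h2 h0'
    have hsq : ‖A x‖ ^ 2 ≤ (1 - lam) * ⟪A x, x⟫ := by
      rw [h1] at h2'
      have hpow : (‖A x‖ ^ 2) ^ 2 = ‖A x‖ ^ 2 * ‖A x‖ ^ 2 := by ring
      have hAx2 : 0 < ‖A x‖ ^ 2 := by positivity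
      nlinarith [h2']
    have hfin : ‖A x‖ ^ 2 ≤ ((1 - lam) * ‖x‖) ^ 2 := by
      have := hAub x
      have h0' : 0 ≤ ⟪A x, x⟫ := hApsd x
      have hl : 0 ≤ 1 - lam := by linarith
      calc ‖A x‖ ^ 2 ≤ (1 - lam) * ⟪A x, x⟫ := hsq
        _ ≤ (1 - lam) * ((1 - lam) * ‖x‖ ^ 2) := mul_le_mul_of_nonneg_left (this) hl
        _ = ((1 - lam) * ‖x‖) ^ 2 := by ring
    exact le_of_sq_le_sq' (mul_nonneg (by linarith) (norm_nonneg x)) hfin (norm_nonneg _)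

end Concrete2

section Concrete3

variable {m n : ℕ}

lemma stackedQuad_eq (W : Matrix (Fin m) (Fin m) ℝ) (x : EuclideanSpace ℝ (Fin m × Fin n)) :
    stackedQuad m n W x = ⟪(1/2 : ℝ) • (x - wop W x), x⟫ := by
  rw [stackedQuad, real_inner_smul_left, inner_sub_left, real_inner_self_eq_norm_sq,
    wop_quadform]

lemma stackedQuad_hasFDerivAt (W : Matrix (Fin m) (Fin m) ℝ) (hWsymm : W.IsSymm)
    (hWnonneg : ∀ i j, 0 ≤ W i j) (hWrow : ∀ i, ∑ j, W i j = 1)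
    (x : EuclideanSpace ℝ (Fin m × Fin n)) :
    HasFDerivAt (stackedQuad m n W) (innerSL ℝ (x - wop W x)) x := by
  set T : EuclideanSpace ℝ (Fin m × Fin n) → EuclideanSpace ℝ (Fin m × Fin n) :=
    fun v => (1/2 : ℝ) • (v - wop W v) with hT
  have hTadd : ∀ u v, T (u + v) = T u + T v := by
    intro u v
    simp only [hT, wop_add]
    module
  have hTsym : ∀ u v, ⟪T u, v⟫ = ⟪u, T v⟫ := by
    intro u v
    simp only [hT, real_inner_smul_left, real_inner_smul_right, inner_sub_left,
      inner_sub_right, wop_sa W hWsymm]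
  have hTbnd : ∀ v, ‖T v‖ ≤ 1 * ‖v‖ := by
    intro v
    simp only [hT, norm_smul, Real.norm_eq_abs]
    have : ‖v - wop W v‖ ≤ ‖v‖ + ‖wop W v‖ := norm_sub_le _ _
    have h2 := wop_norm_le W hWsymm hWnonneg hWrow v
    rw [abs_of_nonneg (by norm_num : (0:ℝ) ≤ 1/2)]
    nlinarith [norm_nonneg v]
  have hfun : stackedQuad m n W = fun v => ⟪T v, v⟫ := by
    funext v
    rw [stackedQuad_eq W v]
  have hderiv := quadform_hasFDerivAt T hTadd hTsym 1 hTbnd x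
  rw [hfun]
  have heq : (2:ℝ) • T x = x - wop W x := by
    rw [hT, smul_smul]
    norm_num
  rwa [heq] at hderiv

lemma stackedQuad_convexOn (W : Matrix (Fin m) (Fin m) ℝ) (hWsymm : W.IsSymm)
    (hWnonneg : ∀ i j, 0 ≤ W i j) (hWrow : ∀ i, ∑ j, W i j = 1) :
    ConvexOn ℝ Set.univ (stackedQuad m n W : EuclideanSpace ℝ (Fin m × Fin n) → ℝ) := by
  set T : EuclideanSpace ℝ (Fin m × Fin n) → EuclideanSpace ℝ (Fin m × Fin n) :=
    fun v => (1/2 : ℝ) • (v - wop W v) with hT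
  have hTadd : ∀ u v, T (u + v) = T u + T v := by
    intro u v
    simp only [hT, wop_add]
    module
  have hTsmul : ∀ (c : ℝ) u, T (c • u) = c • T u := by
    intro c u
    simp only [hT, wop_smul, smul_sub, smul_smul, mul_comm]
  have hTsym : ∀ u v, ⟪T u, v⟫ = ⟪u, T v⟫ := by
    intro u v
    simp only [hT, real_inner_smul_left, real_inner_smul_right, inner_sub_left,
      inner_sub_right, wop_sa W hWsymm]
  have hTpos : ∀ v, 0 ≤ ⟪T v, v⟫ := by
    intro v
    rw [hT]
    simp only [real_inner_smul_left]
    have := aop_psd W hWsymm hWnonneg hWrow v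
    linarith
  have hfun : (stackedQuad m n W : EuclideanSpace ℝ (Fin m × Fin n) → ℝ)
      = fun v => ⟪T v, v⟫ := by
    funext v
    rw [stackedQuad_eq W v]
  rw [hfun]
  exact quadform_convexOn T hTadd hTsmul hTsym hTpos

lemma normsq_convexOn {E : Type*} [NormedAddCommGroup E] [InnerProductSpace ℝ E] [CompleteSpace E]
    {c : ℝ} (hc : 0 ≤ c) :
    ConvexOn ℝ Set.univ (fun x : E => c * ‖x‖ ^ 2) := by
  have hfun : (fun x : E => c * ‖x‖ ^ 2) = fun x : E => ⟪(fun u : E => c • u) x, x⟫ := by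
    funext x
    rw [real_inner_smul_left, real_inner_self_eq_norm_sq]
  rw [hfun]
  exact quadform_convexOn _ (fun u v => smul_add c u v)
    (fun a u => (smul_comm a c u).symm)
    (fun u v => by rw [real_inner_smul_left, real_inner_smul_right])
    (fun v => by
      rw [real_inner_smul_left, real_inner_self_eq_norm_sq]
      positivity)

end Concrete3

section Concrete4

variable {m n : ℕ}

/-- Projection onto the `k`-th block, as a continuous linear map. -/
def projCLM (m n : ℕ) (k : Fin m) :
    EuclideanSpace ℝ (Fin m × Fin n) →L[ℝ] EuclideanSpace ℝ (Fin n) :=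
  LinearMap.toContinuousLinearMap
    { toFun := fun x => (WithLp.toLp 2 (fun i => x (k, i)) : EuclideanSpace ℝ (Fin n)),
      map_add' := fun u v => rfl,
      map_smul' := fun c u => rfl }

lemma projCLM_apply (k : Fin m) (x : EuclideanSpace ℝ (Fin m × Fin n)) (i : Fin n) :
    projCLM m n k x i = x (k, i) := rfl

/-- The gradient of `stackedF`. -/
def gradF (m n : ℕ) (f : Fin m → EuclideanSpace ℝ (Fin n) → ℝ)
    (x : EuclideanSpace ℝ (Fin m × Fin n)) : EuclideanSpace ℝ (Fin m × Fin n) :=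
  WithLp.toLp 2 (fun p : Fin m × Fin n =>
    (1 / (m : ℝ)) * gradient (f p.1) (WithLp.toLp 2 (fun i => x (p.1, i))) p.2)

/-- The `k`-th block of a stacked vector. -/
def blockOf (m n : ℕ) (v : EuclideanSpace ℝ (Fin m × Fin n)) (k : Fin m) :
    EuclideanSpace ℝ (Fin n) :=
  WithLp.toLp 2 (fun i => v (k, i))

lemma blocks_normsq (v : EuclideanSpace ℝ (Fin m × Fin n)) :
    ∑ k, ‖blockOf m n v k‖ ^ 2 = ‖v‖ ^ 2 := by
  rw [normsq_eu v, Fintype.sum_prod_type]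
  refine Finset.sum_congr rfl fun k _ => ?_
  exact normsq_eu (blockOf m n v k)

lemma stackedF_hasFDerivAt (f : Fin m → EuclideanSpace ℝ (Fin n) → ℝ)
    (hdiff : ∀ k, Differentiable ℝ (f k)) (x : EuclideanSpace ℝ (Fin m × Fin n)) :
    HasFDerivAt (stackedF m n f) (innerSL ℝ (gradF m n f x)) x := by
  have hk : ∀ k : Fin m, HasFDerivAt (fun y : EuclideanSpace ℝ (Fin m × Fin n) =>
      f k (projCLM m n k y))
      (((InnerProductSpace.toDual ℝ (EuclideanSpace ℝ (Fin n)))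
        (gradient (f k) (projCLM m n k x)) : EuclideanSpace ℝ (Fin n) →L[ℝ] ℝ).comp
        (projCLM m n k)) x := by
    intro k
    have hgrad : HasGradientAt (f k) (gradient (f k) (projCLM m n k x)) (projCLM m n k x) :=
      ((hdiff k) (projCLM m n k x)).hasGradientAt
    have hfd : HasFDerivAt (f k)
        ((InnerProductSpace.toDual ℝ (EuclideanSpace ℝ (Fin n)))
          (gradient (f k) (projCLM m n k x))) (projCLM m n k x) :=
      hasGradientAt_iff_hasFDerivAt.mp hgrad
    exact hfd.comp x ((projCLM m n k).hasFDerivAt)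
  have hsum : HasFDerivAt (fun y : EuclideanSpace ℝ (Fin m × Fin n) =>
      ∑ k, f k (WithLp.toLp 2 (fun i => y (k, i))))
      (∑ k, (((InnerProductSpace.toDual ℝ (EuclideanSpace ℝ (Fin n)))
        (gradient (f k) (projCLM m n k x)) : EuclideanSpace ℝ (Fin n) →L[ℝ] ℝ).comp
        (projCLM m n k))) x := HasFDerivAt.fun_sum (fun k _ => hk k)
  have hmul := hsum.const_mul (1 / (m : ℝ))
  have hCLM : (1 / (m : ℝ)) • (∑ k, (((InnerProductSpace.toDual ℝ (EuclideanSpace ℝ (Fin n)))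
        (gradient (f k) (projCLM m n k x)) : EuclideanSpace ℝ (Fin n) →L[ℝ] ℝ).comp
        (projCLM m n k))) = innerSL ℝ (gradF m n f x) := by
    ext y
    simp only [ContinuousLinearMap.coe_smul', Pi.smul_apply, ContinuousLinearMap.coe_sum',
      Finset.sum_apply, ContinuousLinearMap.coe_comp', Function.comp_apply,
      InnerProductSpace.toDual_apply_apply, innerSL_apply_apply, smul_eq_mul]
    rw [inner_eu (gradF m n f x) y, Fintype.sum_prod_type, Finset.mul_sum]
    refine Finset.sum_congr rfl fun k _ => ?_
    rw [inner_eu, Finset.mul_sum]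
    have hpy : ∀ i, (projCLM m n k y) i = y (k, i) := fun i => rfl
    have hpx : (projCLM m n k x) = (WithLp.toLp 2 (fun i => x (k, i)) : EuclideanSpace ℝ (Fin n)) := rfl
    refine Finset.sum_congr rfl fun i _ => ?_
    rw [hpy, hpx, gradF]
    ring
  rw [hCLM] at hmul
  exact hmul

lemma gradF_lipschitz (f : Fin m → EuclideanSpace ℝ (Fin n) → ℝ) {L : ℝ} (hL : 0 ≤ L)
    (hm : 1 ≤ m)
    (hsmooth : ∀ k, ∀ x y, ‖gradient (f k) x - gradient (f k) y‖ ≤ L * ‖x - y‖)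
    (x y : EuclideanSpace ℝ (Fin m × Fin n)) :
    ‖gradF m n f x - gradF m n f y‖ ≤ L / m * ‖x - y‖ := by
  have hm0 : (0:ℝ) < (m:ℝ) := by exact_mod_cast Nat.lt_of_lt_of_le Nat.zero_lt_one hm
  have hsq : ‖gradF m n f x - gradF m n f y‖ ^ 2 ≤ (L / m * ‖x - y‖) ^ 2 := by
    rw [normsq_eu]
    set D : Fin m → EuclideanSpace ℝ (Fin n) := fun k =>
      gradient (f k) (blockOf m n x k) - gradient (f k) (blockOf m n y k) with hD
    have hterm : ∀ p : Fin m × Fin n,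
        (gradF m n f x - gradF m n f y) p * (gradF m n f x - gradF m n f y) p
        = (1/(m:ℝ))^2 * (D p.1 p.2 * D p.1 p.2) := by
      intro p
      have hsub : (gradF m n f x - gradF m n f y) p
          = 1/(m:ℝ) * gradient (f p.1) (blockOf m n x p.1) p.2
            - 1/(m:ℝ) * gradient (f p.1) (blockOf m n y p.1) p.2 := by
        rw [eu_sub_apply]; rfl
      have hDp : D p.1 p.2 = gradient (f p.1) (blockOf m n x p.1) p.2
            - gradient (f p.1) (blockOf m n y p.1) p.2 := by
        rw [hD]; exact eu_sub_apply _ _ _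
      rw [hsub, hDp]; ring
    have hblock : ∀ k : Fin m, blockOf m n x k - blockOf m n y k = blockOf m n (x - y) k := by
      intro k
      ext i
      rw [blockOf]
      exact (eu_sub_apply x y (k, i)).symm
    calc ∑ p : Fin m × Fin n, (gradF m n f x - gradF m n f y) p
          * (gradF m n f x - gradF m n f y) p
        = ∑ k : Fin m, ∑ i : Fin n, (1/(m:ℝ))^2 * (D k i * D k i) := by
          rw [Fintype.sum_prod_type]
          refine Finset.sum_congr rfl fun k _ => Finset.sum_congr rfl fun i _ => hterm (k, i)
      _ = (1/(m:ℝ))^2 * ∑ k : Fin m, ‖D k‖^2 := by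
          rw [Finset.mul_sum]
          refine Finset.sum_congr rfl fun k _ => ?_
          rw [normsq_eu, Finset.mul_sum]
      _ ≤ (1/(m:ℝ))^2 * ∑ k : Fin m, (L * ‖blockOf m n x k - blockOf m n y k‖)^2 := by
          apply mul_le_mul_of_nonneg_left _ (by positivity)
          apply Finset.sum_le_sum
          intro k _
          exact pow_le_pow_left₀ (norm_nonneg _) (hsmooth k _ _) 2
      _ = (1/(m:ℝ))^2 * L^2 * ∑ k : Fin m, ‖blockOf m n (x - y) k‖^2 := by
          rw [Finset.mul_sum, Finset.mul_sum]
          refine Finset.sum_congr rfl fun k _ => ?_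
          rw [hblock k]
          ring
      _ = (L / m * ‖x - y‖) ^ 2 := by
          rw [blocks_normsq (x - y)]
          field_simp
  exact le_of_sq_le_sq' (by positivity) hsq (norm_nonneg _)

end Concrete4

section Concrete5

variable {m n : ℕ}

/-- The gradient of `DGDG`. -/
def gradG (m n : ℕ) (W : Matrix (Fin m) (Fin m) ℝ)
    (f : Fin m → EuclideanSpace ℝ (Fin n) → ℝ) (a : ℝ)
    (x : EuclideanSpace ℝ (Fin m × Fin n)) : EuclideanSpace ℝ (Fin m × Fin n) :=
  a • gradF m n f x + (x - wop W x)

lemma DGDG_hasFDerivAt (W : Matrix (Fin m) (Fin m) ℝ) (hWsymm : W.IsSymm)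
    (hWnonneg : ∀ i j, 0 ≤ W i j) (hWrow : ∀ i, ∑ j, W i j = 1)
    (f : Fin m → EuclideanSpace ℝ (Fin n) → ℝ) (hdiff : ∀ k, Differentiable ℝ (f k))
    (a : ℝ) (x : EuclideanSpace ℝ (Fin m × Fin n)) :
    HasFDerivAt (DGDG m n W f a) (innerSL ℝ (gradG m n W f a x)) x := by
  have h1 := (stackedF_hasFDerivAt f hdiff x).const_mul a
  have h2 := stackedQuad_hasFDerivAt W hWsymm hWnonneg hWrow x
  have h3 := h1.add h2
  have hCLM : a • innerSL ℝ (gradF m n f x) + innerSL ℝ (x - wop W x)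
      = innerSL ℝ (gradG m n W f a x) := by
    ext y
    simp only [ContinuousLinearMap.add_apply, ContinuousLinearMap.coe_smul', Pi.smul_apply,
      innerSL_apply_apply, smul_eq_mul, gradG, inner_add_left, real_inner_smul_left]
  rw [hCLM] at h3
  exact h3

lemma toDual_eq_innerSL {E : Type*} [NormedAddCommGroup E] [InnerProductSpace ℝ E]
    [CompleteSpace E] (v : E) :
    (InnerProductSpace.toDual ℝ E) v = innerSL ℝ v := by
  ext w
  rw [InnerProductSpace.toDual_apply_apply, innerSL_apply_apply]

lemma gradient_eq_of_hasFDerivAt_innerSL {E : Type*} [NormedAddCommGroup E]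
    [InnerProductSpace ℝ E] [CompleteSpace E] {g : E → ℝ} {v x : E}
    (h : HasFDerivAt g (innerSL ℝ v) x) : gradient g x = v := by
  have h2 : HasGradientAt g v x := by
    rw [hasGradientAt_iff_hasFDerivAt, toDual_eq_innerSL]
    exact h
  exact h2.gradient

lemma gradient_DGDG (W : Matrix (Fin m) (Fin m) ℝ) (hWsymm : W.IsSymm)
    (hWnonneg : ∀ i j, 0 ≤ W i j) (hWrow : ∀ i, ∑ j, W i j = 1)
    (f : Fin m → EuclideanSpace ℝ (Fin n) → ℝ) (hdiff : ∀ k, Differentiable ℝ (f k))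
    (a : ℝ) (x : EuclideanSpace ℝ (Fin m × Fin n)) :
    gradient (DGDG m n W f a) x = gradG m n W f a x :=
  gradient_eq_of_hasFDerivAt_innerSL (DGDG_hasFDerivAt W hWsymm hWnonneg hWrow f hdiff a x)

/-- Strong-convexity transfer from `G_{α₀}` to `G_a - σ/2‖·‖²`. -/
lemma DGDG_decomp_convex (W : Matrix (Fin m) (Fin m) ℝ) (hWsymm : W.IsSymm)
    (hWnonneg : ∀ i j, 0 ≤ W i j) (hWrow : ∀ i, ∑ j, W i j = 1)
    (f : Fin m → EuclideanSpace ℝ (Fin n) → ℝ)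
    {α₀ μ a σ : ℝ} (hα₀ : 0 < α₀) (ha0 : 0 ≤ a) (haα : a ≤ α₀) (hσ : 0 ≤ σ)
    (hσμ : σ * α₀ ≤ a * μ)
    (hGsc : StrongConvexWith μ (DGDG m n W f α₀)) :
    ConvexOn ℝ Set.univ (fun x : EuclideanSpace ℝ (Fin m × Fin n) =>
      DGDG m n W f a x - σ / 2 * ‖x‖ ^ 2) := by
  set c1 : ℝ := a / α₀ with hc1
  set c2 : ℝ := (a * μ / α₀ - σ) / 2 with hc2
  set c3 : ℝ := 1 - a / α₀ with hc3
  have hc1p : 0 ≤ c1 := div_nonneg ha0 hα₀.le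
  have hc2p : 0 ≤ c2 := by
    rw [hc2]
    have : σ ≤ a * μ / α₀ := by
      rw [le_div_iff₀ hα₀]
      linarith
    linarith
  have hc3p : 0 ≤ c3 := by
    rw [hc3]
    have : a / α₀ ≤ 1 := by
      rw [div_le_one hα₀]
      exact haα
    linarith
  have h1 : ConvexOn ℝ Set.univ
      (fun x : EuclideanSpace ℝ (Fin m × Fin n) => DGDG m n W f α₀ x - μ / 2 * ‖x‖ ^ 2) := hGsc
  have hcomb : ConvexOn ℝ Set.univ (fun x : EuclideanSpace ℝ (Fin m × Fin n) =>
      c1 * (DGDG m n W f α₀ x - μ / 2 * ‖x‖ ^ 2) + (c2 * ‖x‖ ^ 2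
        + c3 * stackedQuad m n W x)) := by
    apply ConvexOn.add
    · exact h1.smul hc1p
    · apply ConvexOn.add
      · exact normsq_convexOn hc2p
      · exact (stackedQuad_convexOn W hWsymm hWnonneg hWrow).smul hc3p
  have hfun : (fun x : EuclideanSpace ℝ (Fin m × Fin n) =>
      DGDG m n W f a x - σ / 2 * ‖x‖ ^ 2)
      = (fun x : EuclideanSpace ℝ (Fin m × Fin n) =>
      c1 * (DGDG m n W f α₀ x - μ / 2 * ‖x‖ ^ 2) + (c2 * ‖x‖ ^ 2
        + c3 * stackedQuad m n W x)) := by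
    funext x
    rw [DGDG, DGDG, hc1, hc2, hc3]
    field_simp
    ring
  rw [hfun]
  exact hcomb

end Concrete5

section Helper

lemma normsq_hasFDerivAt {E : Type*} [NormedAddCommGroup E] [InnerProductSpace ℝ E]
    [CompleteSpace E] (σ : ℝ) (y : E) :
    HasFDerivAt (fun w : E => σ / 2 * ‖w‖ ^ 2) (innerSL ℝ (σ • y)) y := by
  have hfun : (fun w : E => σ/2 * ‖w‖^2) = fun w : E => ⟪(fun u : E => (σ/2) • u) w, w⟫ := by
    funext w; rw [real_inner_smul_left, real_inner_self_eq_norm_sq]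
  rw [hfun]
  have h := quadform_hasFDerivAt (fun u : E => (σ/2) • u) (fun u v => smul_add _ u v)
    (fun u v => by rw [real_inner_smul_left, real_inner_smul_right]) (|σ|/2)
    (fun v => le_of_eq (by rw [norm_smul, Real.norm_eq_abs, abs_div, abs_two])) y
  have h2 : (2:ℝ) • (σ/2) • y = σ • y := by rw [smul_smul]; congr 1; ring
  rwa [h2] at h

lemma innerSL_sub_eq {E : Type*} [NormedAddCommGroup E] [InnerProductSpace ℝ E]
    (u v : E) : innerSL ℝ u - innerSL ℝ v = innerSL ℝ (u - v) := by
  ext w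
  simp only [ContinuousLinearMap.coe_sub', Pi.sub_apply, innerSL_apply_apply, inner_sub_left]

end Helper


set_option maxHeartbeats 1000000 in
/-- **main theorem.** If each `f_k` is `L`-smooth and nonnegative, `G_{α₀}` is
strongly convex for some `α₀ > 0`, and the positive non-increasing stepsizes satisfy
`α(0) ≤ min{(1 + λ_m(W))/L, α₀}`, then the DGD iterates `𝐱(t+1) = 𝐱(t) − ∇G_{α(t)}(𝐱(t))`
are uniformly bounded. -/
theorem dgd_uniformly_bounded {m n : ℕ} (hm : 1 ≤ m) (hn : 1 ≤ n)
    (W : Matrix (Fin m) (Fin m) ℝ)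
    (hWsymm : W.IsSymm)
    (hWnonneg : ∀ i j, 0 ≤ W i j)
    (hWrow : ∀ i, ∑ j, W i j = 1)
    (hWdiag : ∀ i, 0 < W i i)
    (f : Fin m → EuclideanSpace ℝ (Fin n) → ℝ)
    (hdiff : ∀ k, Differentiable ℝ (f k))
    (L : ℝ) (hL : 0 < L)
    (hsmooth : ∀ k, ∀ x y, ‖gradient (f k) x - gradient (f k) y‖ ≤ L * ‖x - y‖)
    (hfnonneg : ∀ k x, 0 ≤ f k x)
    (lam : ℝ) (hlam_gt : -1 < lam)
    (hlam : ∀ u : EuclideanSpace ℝ (Fin m × Fin n),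
      lam * ‖u‖ ^ 2 ≤ ∑ k : Fin m, ∑ j : Fin m, W k j * ∑ i : Fin n, u (k, i) * u (j, i))
    (α₀ : ℝ) (hα₀ : 0 < α₀)
    (hGsc : ∃ μ > 0, StrongConvexWith μ (DGDG m n W f α₀))
    (α : ℕ → ℝ) (hαpos : ∀ t, 0 < α t) (hαmono : ∀ t, α (t + 1) ≤ α t)
    (hα0 : α 0 ≤ min ((1 + lam) / L) α₀)
    (x : ℕ → EuclideanSpace ℝ (Fin m × Fin n))
    (hiter : ∀ t, x (t + 1) = x t - gradient (DGDG m n W f (α t)) (x t)) :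
    ∃ R > 0, ∀ t, ‖x t‖ ≤ R := by
  obtain ⟨μ, hμpos, hsc⟩ := hGsc
  have hα0A : α 0 ≤ α₀ := le_trans hα0 (min_le_right _ _)
  have hα0L : α 0 ≤ (1 + lam) / L := le_trans hα0 (min_le_left _ _)
  have hαle0 : ∀ t, α t ≤ α 0 := by
    intro t
    induction t with
    | zero => exact le_refl _
    | succ t ih => exact le_trans (hαmono t) ih
  have hαA : ∀ t, α t ≤ α₀ := fun t => (hαle0 t).trans hα0A
  have hαL : ∀ t, α t * L ≤ 1 + lam := by
    intro t
    have h1 : α t ≤ (1 + lam) / L := (hαle0 t).trans hα0L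
    exact (le_div_iff₀ hL).mp h1
  have h1lam : 0 < 1 + lam := by linarith
  have hlam1 : lam ≤ 1 := by
    set k0 : Fin m := ⟨0, hm⟩
    set i0 : Fin n := ⟨0, hn⟩
    set u : EuclideanSpace ℝ (Fin m × Fin n) := EuclideanSpace.single (k0, i0) (1:ℝ) with hu
    have hnu : ‖u‖ = 1 := by
      rw [hu, EuclideanSpace.norm_single]
      norm_num
    have h1 := hlam u
    have h2 : (∑ k : Fin m, ∑ j : Fin m, W k j * ∑ i : Fin n, u (k, i) * u (j, i))
        = ⟪wop W u, u⟫ := (wop_quadform W u).symm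
    have h3 : ⟪wop W u, u⟫ ≤ ‖wop W u‖ * ‖u‖ := real_inner_le_norm _ _
    have h4 : ‖wop W u‖ ≤ ‖u‖ := wop_norm_le W hWsymm hWnonneg hWrow u
    rw [h2] at h1
    rw [hnu] at h1 h3 h4
    nlinarith
  have hiter' : ∀ t, x (t + 1) = x t - gradG m n W f (α t) (x t) := by
    intro t
    rw [hiter t, gradient_DGDG W hWsymm hWnonneg hWrow f hdiff]
  set g1 : ℝ := ‖gradF m n f 0‖ with hg1
  have hw0 : wop W (0 : EuclideanSpace ℝ (Fin m × Fin n)) = 0 := by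
    ext p
    have hz : ∀ j : Fin m, W p.1 j * (0 : EuclideanSpace ℝ (Fin m × Fin n)) (j, p.2) = 0 := by
      intro j
      have h0 : (0 : EuclideanSpace ℝ (Fin m × Fin n)) (j, p.2) = 0 := rfl
      rw [h0, mul_zero]
    rw [wop, PiLp.toLp_apply]
    rw [Finset.sum_congr rfl (fun j _ => hz j), Finset.sum_const_zero]
    rfl
  have hG0 : ∀ a : ℝ, gradG m n W f a 0 = a • gradF m n f 0 := by
    intro a
    rw [gradG, hw0, sub_zero, add_zero]
  have hLipG : ∀ a : ℝ, 0 ≤ a → ∀ u v : EuclideanSpace ℝ (Fin m × Fin n),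
      ‖gradG m n W f a u - gradG m n W f a v‖
        ≤ (a * (L / m) + (1 - lam)) * ‖u - v‖ := by
    intro a ha u v
    have hsplit : gradG m n W f a u - gradG m n W f a v
        = a • (gradF m n f u - gradF m n f v)
          + ((u - wop W u) - (v - wop W v)) := by
      rw [gradG, gradG, smul_sub]
      abel
    rw [hsplit]
    calc ‖a • (gradF m n f u - gradF m n f v) + ((u - wop W u) - (v - wop W v))‖
        ≤ ‖a • (gradF m n f u - gradF m n f v)‖ + ‖(u - wop W u) - (v - wop W v)‖ :=
          norm_add_le _ _
      _ ≤ a * (L / m * ‖u - v‖) + (1 - lam) * ‖u - v‖ := by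
          apply add_le_add
          · rw [norm_smul, Real.norm_eq_abs, abs_of_nonneg ha]
            exact mul_le_mul_of_nonneg_left
              (gradF_lipschitz f hL.le hm hsmooth u v) ha
          · rw [aop_sub W u v]
            exact aop_norm_le W hWsymm hWnonneg hWrow hlam1 hlam (u - v)
      _ = (a * (L / m) + (1 - lam)) * ‖u - v‖ := by ring
  rcases eq_or_lt_of_le hm with hm1 | hm2
  · -- case m = 1
    have hm1' : m = 1 := hm1.symm
    subst hm1'
    have hW00 : W 0 0 = 1 := by
      have := hWrow 0
      rwa [Fin.sum_univ_one] at this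
    have hwid : ∀ v : EuclideanSpace ℝ (Fin 1 × Fin n), wop W v = v := by
      intro v
      ext p
      obtain ⟨p1, p2⟩ := p
      have hp1 : p1 = 0 := Subsingleton.elim _ _
      subst hp1
      simp [wop, Fin.sum_univ_one, hW00]
    set sF : EuclideanSpace ℝ (Fin 1 × Fin n) → ℝ := stackedF 1 n f with hsF
    have hcont : Continuous sF := by
      rw [continuous_iff_continuousAt]
      exact fun y => (stackedF_hasFDerivAt f hdiff y).continuousAt
    set G0' : EuclideanSpace ℝ (Fin 1 × Fin n) → EuclideanSpace ℝ (Fin 1 × Fin n) :=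
      fun y => gradG 1 n W f α₀ y - μ • y with hG0'
    have hψ0g : ∀ y, HasFDerivAt
        (fun z => DGDG 1 n W f α₀ z - μ / 2 * ‖z‖ ^ 2) (innerSL ℝ (G0' y)) y := by
      intro y
      have h1 := (DGDG_hasFDerivAt W hWsymm hWnonneg hWrow f hdiff α₀ y).sub
        (normsq_hasFDerivAt μ y)
      rwa [innerSL_sub_eq] at h1
    have hQ0 : ∀ z : EuclideanSpace ℝ (Fin 1 × Fin n), stackedQuad 1 n W z = 0 := by
      intro z
      rw [stackedQuad_eq, hwid z, sub_self, smul_zero, inner_zero_left]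
    set C2 : ℝ := ‖G0' 0‖ with hC2
    have hC2p : 0 ≤ C2 := norm_nonneg _
    have hlow : ∀ y : EuclideanSpace ℝ (Fin 1 × Fin n),
        α₀ * sF y ≥ α₀ * sF 0 - C2 * ‖y‖ + μ / 2 * ‖y‖ ^ 2 := by
      intro y
      have h1 := convex_lower hψ0g hsc 0 y
      rw [sub_zero] at h1
      have h2 : DGDG 1 n W f α₀ y = α₀ * sF y := by
        rw [DGDG, hQ0, add_zero, hsF]
      have h3 : DGDG 1 n W f α₀ 0 = α₀ * sF 0 := by
        rw [DGDG, hQ0, add_zero, hsF]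
      have h4 : ⟪G0' 0, y⟫ ≥ -(C2 * ‖y‖) := by
        have := real_inner_le_norm (G0' 0) (-y)
        rw [inner_neg_right, norm_neg] at this
        rw [hC2]
        linarith
      have h5 : ‖(0 : EuclideanSpace ℝ (Fin 1 × Fin n))‖ = 0 := norm_zero
      rw [h2, h3, h5] at h1
      nlinarith [h1, h4]
    set Rm : ℝ := 2 * C2 / μ + 1 with hRm
    have hRmp : 0 < Rm := by positivity
    obtain ⟨xstar, hxball, hxmin⟩ :=
      (isCompact_closedBall (0 : EuclideanSpace ℝ (Fin 1 × Fin n)) Rm).exists_isMinOn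
        ⟨0, Metric.mem_closedBall_self hRmp.le⟩ hcont.continuousOn
    have hglobal : ∀ y, sF xstar ≤ sF y := by
      intro y
      by_cases hy : ‖y‖ ≤ Rm
      · exact hxmin (by rwa [Metric.mem_closedBall, dist_zero_right])
      · push_neg at hy
        have h0mem : (0 : EuclideanSpace ℝ (Fin 1 × Fin n)) ∈ Metric.closedBall 0 Rm :=
          Metric.mem_closedBall_self hRmp.le
        have hs0 : sF xstar ≤ sF 0 := hxmin h0mem
        have hco := hlow y
        have hy0 : 0 < ‖y‖ := lt_trans hRmp hy
        have hbig : μ / 2 * ‖y‖ ^ 2 - C2 * ‖y‖ > 0 := by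
          have hk : μ / 2 * ‖y‖ > C2 := by
            have h1 : μ / 2 * Rm < μ / 2 * ‖y‖ := by
              apply mul_lt_mul_of_pos_left hy
              positivity
            have h2 : C2 ≤ μ / 2 * Rm := by
              rw [hRm, mul_add, mul_one]
              have he : μ / 2 * (2 * C2 / μ) = C2 := by field_simp
              nlinarith [hμpos]
            linarith
          nlinarith [hy0, hk]
        have hgt : α₀ * sF y > α₀ * sF 0 := by nlinarith [hco, hbig]
        have h6 : sF 0 < sF y := (mul_lt_mul_iff_right₀ hα₀).mp hgt
        linarith
    have hloc : IsLocalMin sF xstar := Filter.Eventually.of_forall hglobal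
    have hfd : fderiv ℝ sF xstar = innerSL ℝ (gradF 1 n f xstar) :=
      (stackedF_hasFDerivAt f hdiff xstar).fderiv
    have hfz : innerSL ℝ (gradF 1 n f xstar) = 0 := by
      rw [← hfd]
      exact hloc.fderiv_eq_zero
    have hgF0 : gradF 1 n f xstar = 0 := by
      have hap := congrArg (fun T : EuclideanSpace ℝ (Fin 1 × Fin n) →L[ℝ] ℝ =>
        T (gradF 1 n f xstar)) hfz
      simp only [innerSL_apply_apply, ContinuousLinearMap.zero_apply] at hap
      rwa [real_inner_self_eq_norm_sq, pow_eq_zero_iff (by norm_num : 2 ≠ 0),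
        norm_eq_zero] at hap
    have hfix : ∀ a : ℝ, gradG 1 n W f a xstar = 0 := by
      intro a
      rw [gradG, hgF0, smul_zero, zero_add, hwid, sub_self]
    have hstep : ∀ t, ‖x (t + 1) - xstar‖ ≤ ‖x t - xstar‖ := by
      intro t
      set a : ℝ := α t with ha
      have hK : (0:ℝ) ≤ a * L := mul_nonneg (hαpos t).le hL.le
      have hLip1 : ∀ u v : EuclideanSpace ℝ (Fin 1 × Fin n),
          ‖gradG 1 n W f a u - gradG 1 n W f a v‖ ≤ (a * L) * ‖u - v‖ := by
        intro u v
        have hsplit : gradG 1 n W f a u - gradG 1 n W f a v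
            = a • (gradF 1 n f u - gradF 1 n f v) := by
          rw [gradG, gradG, hwid, hwid, sub_self, sub_self, add_zero, add_zero, smul_sub]
        rw [hsplit, norm_smul, Real.norm_eq_abs, abs_of_nonneg (hαpos t).le]
        have hlip := gradF_lipschitz f hL.le (le_refl 1) hsmooth u v
        have hcast : ((1:ℕ):ℝ) = 1 := by norm_num
        rw [hcast, div_one] at hlip
        calc a * ‖gradF 1 n f u - gradF 1 n f v‖ ≤ a * (L * ‖u - v‖) :=
              mul_le_mul_of_nonneg_left hlip (hαpos t).le
          _ = (a * L) * ‖u - v‖ := by ring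
      have hψconv : ConvexOn ℝ Set.univ
          (fun z : EuclideanSpace ℝ (Fin 1 × Fin n) =>
            DGDG 1 n W f a z - (0:ℝ) / 2 * ‖z‖ ^ 2) :=
        DGDG_decomp_convex W hWsymm hWnonneg hWrow f hα₀ (hαpos t).le (hαA t)
          (le_refl 0) (by nlinarith [mul_nonneg (hαpos t).le hμpos.le]) hsc
      have hcond : a * L + 3 * (0:ℝ) ≤ 2 := by
        have := hαL t
        linarith
      have hcontr := step_contraction
        (fun y => DGDG_hasFDerivAt W hWsymm hWnonneg hWrow f hdiff a y)
        hK (le_refl (0:ℝ)) hLip1 hψconv hcond (x t) xstar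
      rw [hfix a, sub_zero] at hcontr
      rw [hiter' t]
      calc ‖x t - gradG 1 n W f a (x t) - xstar‖
          ≤ (1 - 0) * ‖x t - xstar‖ := hcontr
        _ = ‖x t - xstar‖ := by ring
    have hbound : ∀ t, ‖x t - xstar‖ ≤ ‖x 0 - xstar‖ := by
      intro t
      induction t with
      | zero => exact le_refl _
      | succ t ih => exact le_trans (hstep t) ih
    refine ⟨‖x 0 - xstar‖ + ‖xstar‖ + 1, by positivity, fun t => ?_⟩
    calc ‖x t‖ = ‖x t - xstar + xstar‖ := by rw [sub_add_cancel]
      _ ≤ ‖x t - xstar‖ + ‖xstar‖ := norm_add_le _ _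
      _ ≤ ‖x 0 - xstar‖ + ‖xstar‖ + 1 := by
          have := hbound t
          linarith
  · -- case 2 ≤ m
    have hm0 : (0:ℝ) < m := by exact_mod_cast Nat.lt_of_lt_of_le Nat.zero_lt_one hm
    have hm2R : (2:ℝ) ≤ m := by exact_mod_cast hm2
    have hminv : (1:ℝ) / m ≤ 1 / 2 := by
      rw [div_le_div_iff₀ hm0 (by norm_num : (0:ℝ) < 2)]
      linarith
    have hminv0 : (0:ℝ) < 1 / m := by positivity
    set ε₀ : ℝ := (1 + lam) * (1 - 1 / m) with hε₀
    have hε₀p : 0 < ε₀ := by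
      apply mul_pos h1lam
      linarith
    have hε₀2 : ε₀ ≤ 2 := by
      rw [hε₀]
      nlinarith [h1lam, hlam1, hminv0]
    set μb : ℝ := min (μ / α₀) (ε₀ / (3 * α₀)) with hμb
    have hμbp : 0 < μb := lt_min (by positivity) (by positivity)
    have hσbd : ∀ t, α t * μb ≤ ε₀ / 3 := by
      intro t
      have h3 : μb ≤ ε₀ / (3 * α₀) := min_le_right _ _
      have h4 : α t * μb ≤ α₀ * (ε₀ / (3 * α₀)) :=
        mul_le_mul (hαA t) h3 hμbp.le hα₀.le
      have h5 : α₀ * (ε₀ / (3 * α₀)) = ε₀ / 3 := by field_simp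
      linarith
    have hstep : ∀ t, ‖x (t + 1)‖ ≤ (1 - α t * μb) * ‖x t‖ + α t * g1 := by
      intro t
      set a : ℝ := α t with ha
      set σ : ℝ := a * μb with hσdef
      set K : ℝ := a * (L / m) + (1 - lam) with hKdef
      have haP : 0 < a := hαpos t
      have hK : 0 ≤ K := by
        rw [hKdef]
        have h0 : 0 ≤ a * (L / m) := by positivity
        linarith [hlam1]
      have hσ0 : 0 ≤ σ := by positivity
      have hψconv : ConvexOn ℝ Set.univ
          (fun z : EuclideanSpace ℝ (Fin m × Fin n) =>
            DGDG m n W f a z - σ / 2 * ‖z‖ ^ 2) := by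
        apply DGDG_decomp_convex W hWsymm hWnonneg hWrow f hα₀ haP.le (hαA t) hσ0 _ hsc
        rw [hσdef]
        have h1 : μb ≤ μ / α₀ := min_le_left _ _
        have h2 : a * μb * α₀ ≤ a * (μ / α₀) * α₀ := by
          apply mul_le_mul_of_nonneg_right _ hα₀.le
          exact mul_le_mul_of_nonneg_left h1 haP.le
        have h3 : a * (μ / α₀) * α₀ = a * μ := by field_simp
        linarith
      have hcond : K + 3 * σ ≤ 2 := by
        rw [hKdef, hσdef]
        have h1 : a * (L / m) ≤ (1 + lam) / m := by
          have he : a * (L / m) = (a * L) / m := by ring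
          rw [he, div_le_div_iff₀ hm0 hm0]
          nlinarith [hαL t, hm0]
        have h2 : 3 * (a * μb) ≤ ε₀ := by
          have := hσbd t
          linarith
        have h6 : (1 + lam) / m + (1 - lam) + ε₀ = 2 := by
          rw [hε₀]
          field_simp
          ring
        linarith
      have hcontr := step_contraction
        (fun y => DGDG_hasFDerivAt W hWsymm hWnonneg hWrow f hdiff a y)
        hK hσ0 (hLipG a haP.le) hψconv hcond (x t) 0
      rw [sub_zero, hG0 a] at hcontr
      have hnorm0 : ‖a • gradF m n f 0‖ = a * g1 := by
        rw [norm_smul, Real.norm_eq_abs, abs_of_nonneg haP.le, hg1]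
      calc ‖x (t + 1)‖ = ‖x t - gradG m n W f a (x t)‖ := by rw [hiter' t]
        _ = ‖(x t - gradG m n W f a (x t)) - (0 - a • gradF m n f 0)
              + (0 - a • gradF m n f 0)‖ := by rw [sub_add_cancel]
        _ ≤ ‖(x t - gradG m n W f a (x t)) - (0 - a • gradF m n f 0)‖
              + ‖(0:EuclideanSpace ℝ (Fin m × Fin n)) - a • gradF m n f 0‖ := norm_add_le _ _
        _ ≤ (1 - σ) * ‖x t‖ + a * g1 := by
            apply add_le_add hcontr
            rw [zero_sub, norm_neg, hnorm0]
        _ = (1 - a * μb) * ‖x t‖ + a * g1 := by rw [hσdef]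
    set M : ℝ := max ‖x 0‖ (g1 / μb) with hM
    have hMb : ∀ t, ‖x t‖ ≤ M := by
      intro t
      induction t with
      | zero => exact le_max_left _ _
      | succ t ih =>
        have hσle : α t * μb ≤ 2 / 3 := le_trans (hσbd t) (by linarith [hε₀2])
        have hσ0 : 0 ≤ α t * μb := mul_nonneg (hαpos t).le hμbp.le
        have hgeq : (α t * μb) * (g1 / μb) = α t * g1 := by
          field_simp
        calc ‖x (t+1)‖ ≤ (1 - α t * μb) * ‖x t‖ + α t * g1 := hstep t
          _ = (1 - α t * μb) * ‖x t‖ + (α t * μb) * (g1 / μb) := by rw [hgeq]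
          _ ≤ (1 - α t * μb) * M + (α t * μb) * M := by
              apply add_le_add
              · apply mul_le_mul_of_nonneg_left ih
                linarith
              · exact mul_le_mul_of_nonneg_left (le_max_right _ _) hσ0
          _ = M := by ring
    have hM0 : 0 ≤ M := le_trans (norm_nonneg _) (le_max_left _ _)
    refine ⟨M + 1, by linarith, fun t => ?_⟩
    have := hMb t
    linarith
end
end

section
/- Assume G_{α₀} is μ-strongly convex for some α₀ > 0 and μ > 0. Let C₁ > 0 be a constant such that ‖∇F(𝐱_*^β + s(𝐱_*^α − 𝐱_*^β))‖ ≤ C₁ for all s ∈ [0,1] and all α, β ∈ (0, α₀]. Then for all α, β ∈ (0, α₀], the minimizers satisfy ‖𝐱_*^α − 𝐱_*^β‖ ≤ (2α₀ C₁ |β − α|)/(μ β). -/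
open Finset Set
open scoped RealInnerProductSpace

noncomputable section

/-! ### Auxiliary lemmas -/

/-- A finite sum of convex functions is convex. -/
lemma myConvexOn_sum {E : Type*} [AddCommGroup E] [Module ℝ E] {ι : Type*} (t : Finset ι)
    (g : ι → E → ℝ) (h : ∀ i ∈ t, ConvexOn ℝ Set.univ (g i)) :
    ConvexOn ℝ Set.univ (fun x => ∑ i ∈ t, g i x) := by
  classical
  induction t using Finset.induction_on with
  | empty => simpa using convexOn_const 0 convex_univ
  | insert _ _ hnot ih =>
    simp only [Finset.sum_insert hnot]
    exact (h _ (Finset.mem_insert_self _ _)).add (ih fun i hi => h i (Finset.mem_insert_of_mem hi))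

/-- Sum-of-squares representation of the quadratic penalty. -/
lemma quad_sos {m n : ℕ} (W : Matrix (Fin m) (Fin m) ℝ) (hWsymm : W.IsSymm)
    (hWrow : ∀ i, ∑ j, W i j = 1) (x : EuclideanSpace ℝ (Fin m × Fin n)) :
    stackedQuad m n W x
      = (1/4) * ∑ k : Fin m, ∑ j : Fin m, W k j * ∑ i : Fin n, (x (k, i) - x (j, i))^2 := by
  have hcol : ∀ j, ∑ k, W k j = 1 := by
    intro j
    rw [show ∑ k, W k j = ∑ k, W j k from Finset.sum_congr rfl fun k _ => (hWsymm.apply k j).symm]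
    exact hWrow j
  have hnorm : ‖x‖^2 = ∑ k : Fin m, ∑ i : Fin n, x (k, i)^2 := by
    rw [EuclideanSpace.norm_eq, Real.sq_sqrt (by positivity)]
    rw [Fintype.sum_prod_type]
    simp [Real.norm_eq_abs, sq_abs]
  have expand : ∀ k j : Fin m, W k j * ∑ i : Fin n, (x (k, i) - x (j, i))^2
      = W k j * ∑ i : Fin n, x (k, i)^2 + W k j * ∑ i : Fin n, x (j, i)^2
        - 2 * (W k j * ∑ i : Fin n, x (k, i) * x (j, i)) := by
    intro k j
    have : ∑ i : Fin n, (x (k, i) - x (j, i))^2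
        = ∑ i : Fin n, x (k, i)^2 + ∑ i : Fin n, x (j, i)^2
          - 2 * ∑ i : Fin n, x (k, i) * x (j, i) := by
      rw [← Finset.sum_add_distrib, Finset.mul_sum, ← Finset.sum_sub_distrib]
      exact Finset.sum_congr rfl fun i _ => by ring
    rw [this]; ring
  have key : ∑ k : Fin m, ∑ j : Fin m, W k j * ∑ i : Fin n, (x (k, i) - x (j, i))^2
      = 2 * (∑ k : Fin m, ∑ i : Fin n, x (k, i)^2)
        - 2 * ∑ k : Fin m, ∑ j : Fin m, W k j * ∑ i : Fin n, x (k, i) * x (j, i) := by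
    simp_rw [expand, Finset.sum_sub_distrib, Finset.sum_add_distrib, ← Finset.mul_sum]
    have h1 : ∑ k : Fin m, ∑ j : Fin m, W k j * ∑ i : Fin n, x (k, i)^2
        = ∑ k : Fin m, ∑ i : Fin n, x (k, i)^2 := by
      refine Finset.sum_congr rfl fun k _ => ?_
      rw [← Finset.sum_mul, hWrow k, one_mul]
    have h2 : ∑ k : Fin m, ∑ j : Fin m, W k j * ∑ i : Fin n, x (j, i)^2
        = ∑ k : Fin m, ∑ i : Fin n, x (k, i)^2 := by
      rw [Finset.sum_comm]
      refine Finset.sum_congr rfl fun j _ => ?_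
      rw [← Finset.sum_mul, hcol j, one_mul]
    rw [h1, h2]
    ring
  rw [stackedQuad, hnorm, key]
  ring

/-- The square of a coordinate difference is convex. -/
lemma sq_diff_convex {m n : ℕ} (k j : Fin m) (i : Fin n) :
    ConvexOn ℝ Set.univ (fun x : EuclideanSpace ℝ (Fin m × Fin n) => (x (k, i) - x (j, i))^2) := by
  have h := (Even.convexOn_pow even_two : ConvexOn ℝ Set.univ fun r : ℝ => r ^ 2)
  have := h.comp_linearMap ((EuclideanSpace.proj (k, i) - EuclideanSpace.proj (j, i) :
      EuclideanSpace ℝ (Fin m × Fin n) →L[ℝ] ℝ) : EuclideanSpace ℝ (Fin m × Fin n) →ₗ[ℝ] ℝ)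
  exact this

/-- The quadratic penalty is convex. -/
lemma quad_convex {m n : ℕ} (W : Matrix (Fin m) (Fin m) ℝ) (hWsymm : W.IsSymm)
    (hWnonneg : ∀ i j, 0 ≤ W i j) (hWrow : ∀ i, ∑ j, W i j = 1) :
    ConvexOn ℝ Set.univ (stackedQuad m n W) := by
  have heq : stackedQuad m n W = fun x : EuclideanSpace ℝ (Fin m × Fin n) =>
      (1/4) * ∑ k : Fin m, ∑ j : Fin m, W k j * ∑ i : Fin n, (x (k, i) - x (j, i))^2 :=
    funext fun x => quad_sos W hWsymm hWrow x
  rw [heq]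
  have h : ConvexOn ℝ Set.univ (fun x : EuclideanSpace ℝ (Fin m × Fin n) =>
      ∑ k : Fin m, ∑ j : Fin m, W k j * ∑ i : Fin n, (x (k, i) - x (j, i))^2) := by
    refine myConvexOn_sum _ _ fun k _ => myConvexOn_sum _ _ fun j _ => ?_
    have := (myConvexOn_sum (Finset.univ : Finset (Fin n))
      (fun i (x : EuclideanSpace ℝ (Fin m × Fin n)) => (x (k, i) - x (j, i))^2)
      (fun i _ => sq_diff_convex k j i)).smul (hWnonneg k j)
    simpa [smul_eq_mul] using this
  simpa [smul_eq_mul] using h.smul (by norm_num : (0:ℝ) ≤ 1/4)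

/-- Parallelogram-type identity for convex combinations. -/
lemma norm_combo_identity {E : Type*} [NormedAddCommGroup E] [InnerProductSpace ℝ E]
    (x y : E) {a b : ℝ} (hab : a + b = 1) :
    a * ‖x‖^2 + b * ‖y‖^2 - ‖a • x + b • y‖^2 = a * b * ‖x - y‖^2 := by
  have h1 : ‖a • x + b • y‖^2 = a^2 * ‖x‖^2 + 2 * (a * b * ⟪x, y⟫) + b^2 * ‖y‖^2 := by
    rw [norm_add_sq_real, norm_smul, norm_smul, real_inner_smul_left, real_inner_smul_right]
    simp [Real.norm_eq_abs, mul_pow, sq_abs]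
    ring
  have h2 : ‖x - y‖^2 = ‖x‖^2 - 2 * ⟪x, y⟫ + ‖y‖^2 := by
    rw [norm_sub_sq_real]
  rw [h1, h2]
  have hb : b = 1 - a := by linarith
  subst hb; ring

/-- Strong convexity gives a quadratic growth bound at a minimizer. -/
lemma strong_min_gap {E : Type*} [NormedAddCommGroup E] [InnerProductSpace ℝ E]
    {c : ℝ} {g : E → ℝ}
    (hsc : ConvexOn ℝ Set.univ (fun x => g x - c / 2 * ‖x‖ ^ 2))
    {x : E} (hx : ∀ y, g x ≤ g y) (y : E) :
    c / 2 * ‖y - x‖ ^ 2 ≤ g y - g x := by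
  have key : ∀ t : ℝ, t ∈ Set.Ioc (0:ℝ) 1 → c / 2 * ((1 - t) * ‖y - x‖^2) ≤ g y - g x := by
    rintro t ⟨ht0, ht1⟩
    have hab : (1 - t) + t = 1 := by ring
    have hcvx := hsc.2 (Set.mem_univ x) (Set.mem_univ y) (by linarith : (0:ℝ) ≤ 1 - t)
      (le_of_lt ht0) hab
    simp only [smul_eq_mul] at hcvx
    have hid := norm_combo_identity x y hab
    have hmin := hx ((1 - t) • x + t • y)
    have hxy : ‖x - y‖ = ‖y - x‖ := norm_sub_rev x y
    rw [hxy] at hid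
    have hid2 : c / 2 * ((1 - t) * ‖x‖^2) + c / 2 * (t * ‖y‖^2)
        - c / 2 * ‖(1 - t) • x + t • y‖^2 = c / 2 * ((1 - t) * t * ‖y - x‖^2) := by
      rw [← hid]; ring
    have h3 : c / 2 * ((1 - t) * t * ‖y - x‖^2) ≤ t * (g y - g x) := by
      nlinarith [hcvx, hmin, hid2]
    have h4 : t * (c / 2 * ((1 - t) * ‖y - x‖^2)) ≤ t * (g y - g x) := by nlinarith [h3]
    exact le_of_mul_le_mul_left h4 ht0
  have htend : Filter.Tendsto (fun t : ℝ => c / 2 * ((1 - t) * ‖y - x‖^2))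
      (nhdsWithin 0 (Set.Ioi 0)) (nhds (c / 2 * ((1 - 0) * ‖y - x‖^2))) := by
    apply Filter.Tendsto.mono_left _ nhdsWithin_le_nhds
    exact (Continuous.tendsto (by continuity) 0)
  have hev : ∀ᶠ t in nhdsWithin (0:ℝ) (Set.Ioi 0),
      c / 2 * ((1 - t) * ‖y - x‖^2) ≤ g y - g x := by
    filter_upwards [Ioo_mem_nhdsGT_of_mem (by norm_num : (0:ℝ) ∈ Set.Ico (0:ℝ) 1)] with t ht
    exact key t ⟨ht.1, le_of_lt ht.2⟩
  have := le_of_tendsto htend hev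
  simpa using this

/-- The slice map `x ↦ x_k` is linear. -/
def sliceMap (m n : ℕ) (k : Fin m) :
    EuclideanSpace ℝ (Fin m × Fin n) →ₗ[ℝ] EuclideanSpace ℝ (Fin n) where
  toFun x := WithLp.toLp 2 (fun i => x (k, i))
  map_add' _ _ := rfl
  map_smul' _ _ := rfl

lemma stackedF_differentiable (m n : ℕ) (f : Fin m → EuclideanSpace ℝ (Fin n) → ℝ)
    (hdiff : ∀ k, Differentiable ℝ (f k)) : Differentiable ℝ (stackedF m n f) := by
  unfold stackedF
  apply Differentiable.const_mul
  apply Differentiable.fun_sum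
  intro k _
  exact (hdiff k).comp ((sliceMap m n k).toContinuousLinearMap.differentiable)

lemma gradient_norm_eq_fderiv_norm {E : Type*} [NormedAddCommGroup E] [InnerProductSpace ℝ E]
    [CompleteSpace E] (f : E → ℝ) (x : E) : ‖gradient f x‖ = ‖fderiv ℝ f x‖ := by
  unfold gradient
  exact LinearIsometryEquiv.norm_map _ _

/-- If `G_{α₀}` is `μ`-strongly convex and `C₁` bounds `‖∇F‖` along all segments
between minimizers, then `‖𝐱_*^α − 𝐱_*^β‖ ≤ 2α₀C₁|β − α|/(μβ)` for all `α, β ∈ (0, α₀]`. -/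
theorem dgd_minimizers_lipschitz {m n : ℕ} (hm : 1 ≤ m) (hn : 1 ≤ n)
    (W : Matrix (Fin m) (Fin m) ℝ)
    (hWsymm : W.IsSymm)
    (hWnonneg : ∀ i j, 0 ≤ W i j)
    (hWrow : ∀ i, ∑ j, W i j = 1)
    (hWdiag : ∀ i, 0 < W i i)
    (f : Fin m → EuclideanSpace ℝ (Fin n) → ℝ)
    (hdiff : ∀ k, Differentiable ℝ (f k))
    (μ α₀ : ℝ) (hμ : 0 < μ) (hα₀ : 0 < α₀)
    (hGsc : StrongConvexWith μ (DGDG m n W f α₀))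
    (xstar : ℝ → EuclideanSpace ℝ (Fin m × Fin n))
    (hmin : ∀ α ∈ Set.Ioc (0 : ℝ) α₀, ∀ y, DGDG m n W f α (xstar α) ≤ DGDG m n W f α y)
    (C₁ : ℝ) (hC₁pos : 0 < C₁)
    (hC₁ : ∀ s ∈ Set.Icc (0 : ℝ) 1, ∀ α ∈ Set.Ioc (0 : ℝ) α₀, ∀ β ∈ Set.Ioc (0 : ℝ) α₀,
      ‖gradient (stackedF m n f) (xstar β + s • (xstar α - xstar β))‖ ≤ C₁) :
    ∀ α ∈ Set.Ioc (0 : ℝ) α₀, ∀ β ∈ Set.Ioc (0 : ℝ) α₀,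
      ‖xstar α - xstar β‖ ≤ 2 * α₀ * C₁ * |β - α| / (μ * β) := by
  intro α hα β hβ
  obtain ⟨hα0, hαle⟩ := hα
  obtain ⟨hβ0, hβle⟩ := hβ
  have hQconv := quad_convex W hWsymm hWnonneg hWrow (n := n)
  -- strong convexity of G_β with parameter μβ/α₀
  have hβsc : ConvexOn ℝ Set.univ
      (fun x : EuclideanSpace ℝ (Fin m × Fin n) =>
        DGDG m n W f β x - (μ * β / α₀) / 2 * ‖x‖ ^ 2) := by
    have heq : (fun x : EuclideanSpace ℝ (Fin m × Fin n) =>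
        DGDG m n W f β x - (μ * β / α₀) / 2 * ‖x‖ ^ 2)
        = fun x => (β / α₀) • (DGDG m n W f α₀ x - μ / 2 * ‖x‖ ^ 2)
          + (1 - β / α₀) • stackedQuad m n W x := by
      funext x
      simp only [DGDG, smul_eq_mul]
      field_simp
      ring
    rw [heq]
    exact (hGsc.smul (by positivity)).add
      (hQconv.smul (by rw [sub_nonneg]; exact div_le_one_of_le₀ hβle hα₀.le))
  -- quadratic growth at the minimizer of G_β
  have h1 := strong_min_gap hβsc (hmin β ⟨hβ0, hβle⟩) (xstar α)
  -- mean value bound for F on the segment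
  have hFdiff := stackedF_differentiable m n f hdiff
  have hbound : ∀ z ∈ segment ℝ (xstar β) (xstar α), ‖fderiv ℝ (stackedF m n f) z‖ ≤ C₁ := by
    intro z hz
    rw [segment_eq_image'] at hz
    obtain ⟨t, ht, rfl⟩ := hz
    rw [← gradient_norm_eq_fderiv_norm]
    exact hC₁ t ht α ⟨hα0, hαle⟩ β ⟨hβ0, hβle⟩
  have hMVT : ‖stackedF m n f (xstar α) - stackedF m n f (xstar β)‖
      ≤ C₁ * ‖xstar α - xstar β‖ :=
    (convex_segment _ _).norm_image_sub_le_of_norm_fderiv_le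
      (fun z _ => hFdiff z) hbound (left_mem_segment ℝ _ _) (right_mem_segment ℝ _ _)
  set d := ‖xstar α - xstar β‖ with hd_def
  have hd : 0 ≤ d := norm_nonneg _
  -- decompose the gap
  have h2 : DGDG m n W f β (xstar α) - DGDG m n W f β (xstar β)
      = (β - α) * (stackedF m n f (xstar α) - stackedF m n f (xstar β))
        + (DGDG m n W f α (xstar α) - DGDG m n W f α (xstar β)) := by
    simp only [DGDG]; ring
  have h3 : DGDG m n W f α (xstar α) - DGDG m n W f α (xstar β) ≤ 0 :=
    sub_nonpos.mpr (hmin α ⟨hα0, hαle⟩ (xstar β))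
  have h4 : (β - α) * (stackedF m n f (xstar α) - stackedF m n f (xstar β))
      ≤ |β - α| * (C₁ * d) := by
    calc (β - α) * (stackedF m n f (xstar α) - stackedF m n f (xstar β))
        ≤ |(β - α) * (stackedF m n f (xstar α) - stackedF m n f (xstar β))| := le_abs_self _
      _ = |β - α| * |stackedF m n f (xstar α) - stackedF m n f (xstar β)| := abs_mul _ _
      _ ≤ |β - α| * (C₁ * d) := by
          apply mul_le_mul_of_nonneg_left _ (abs_nonneg _)
          rw [← Real.norm_eq_abs]
          exact hMVT
  have key : μ * β / α₀ / 2 * d ^ 2 ≤ |β - α| * (C₁ * d) := by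
    rw [h2] at h1
    linarith
  have key2 : μ * β * d ^ 2 ≤ 2 * α₀ * (C₁ * |β - α|) * d := by
    have hmul := mul_le_mul_of_nonneg_left key (by positivity : (0:ℝ) ≤ 2 * α₀)
    have e : 2 * α₀ * (μ * β / α₀ / 2 * d ^ 2) = μ * β * d ^ 2 := by
      field_simp
    nlinarith [hmul]
  rcases eq_or_lt_of_le hd with h0 | h0
  · rw [← h0]
    positivity
  · rw [le_div_iff₀ (by positivity : (0:ℝ) < μ * β)]
    nlinarith [key2, h0]
end
end

section
/- Assume each local cost is a quadratic form f_k(x) = (1/2) xᵀ A_k x with A_k an n×n symmetric positive semidefinite matrix (so each f_k is convex), and assume the aggregate cost f(x) = (1/2m) xᵀ(Σ_{k=1}^m A_k) x is μ-strongly convex for some μ > 0. Then for every α > 0 the function G_α is strongly convex (i.e., there exists c(α) > 0 with G_α(𝐱) ≥ c(α)‖𝐱‖² for all 𝐱 ∈ ℝ^{nm}). -/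
open Finset Set
open scoped RealInnerProductSpace

noncomputable section

/-- norm squared in Euclidean space is the sum of squares of coordinates. -/
lemma eucl_norm_sq {ι : Type*} [Fintype ι] (x : EuclideanSpace ℝ ι) :
    ‖x‖ ^ 2 = ∑ i, x i ^ 2 := by
  rw [EuclideanSpace.norm_eq, Real.sq_sqrt (by positivity)]
  simp [sq_abs]

/-- PSD quadratic forms are nonnegative, in coordinates. -/
lemma psd_quad_nonneg {n : ℕ} (A : Matrix (Fin n) (Fin n) ℝ) (h : A.PosSemidef)
    (v : Fin n → ℝ) : 0 ≤ ∑ i, ∑ j, A i j * v i * v j := by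
  have h2 := h.dotProduct_mulVec_nonneg v
  simp only [dotProduct, Matrix.mulVec, Pi.star_apply, star_trivial,
    RCLike.re_to_real] at h2
  calc (0:ℝ) ≤ ∑ i, v i * ∑ j, A i j * v j := h2
    _ = ∑ i, ∑ j, A i j * v i * v j := by
        refine Finset.sum_congr rfl fun i _ => ?_
        rw [Finset.mul_sum]; exact Finset.sum_congr rfl fun j _ => by ring

set_option maxHeartbeats 1600000 in
/-- If each `f_k(x) = (1/2)xᵀA_k x` with `A_k` symmetric positive semidefinite
and the aggregate cost `f` is `μ`-strongly convex, then for every `α > 0` the function `G_α` is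
strongly convex: there is `c(α) > 0` with `G_α(𝐱) ≥ c(α)‖𝐱‖²` for all `𝐱`. -/
theorem Galpha_strongly_convex_of_convex_quadratics {m n : ℕ} (hm : 1 ≤ m) (hn : 1 ≤ n)
    (W : Matrix (Fin m) (Fin m) ℝ)
    (hWsymm : W.IsSymm)
    (hWnonneg : ∀ i j, 0 ≤ W i j)
    (hWrow : ∀ i, ∑ j, W i j = 1)
    (hWdiag : ∀ i, 0 < W i i)
    (β : ℝ) (hβlt : β < 1)
    (hβ : ∀ u : EuclideanSpace ℝ (Fin m × Fin n),
      (∀ i : Fin n, ∑ k : Fin m, u (k, i) = 0) →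
      (1 - β) * ‖u‖ ^ 2 ≤ 2 * stackedQuad m n W u)
    (A : Fin m → Matrix (Fin n) (Fin n) ℝ)
    (hAsymm : ∀ k, (A k).IsSymm)
    (hApsd : ∀ k, (A k).PosSemidef)
    (f : Fin m → EuclideanSpace ℝ (Fin n) → ℝ)
    (hf : ∀ k, ∀ x : EuclideanSpace ℝ (Fin n),
      f k x = (1 / 2) * ∑ i : Fin n, ∑ j : Fin n, A k i j * x i * x j)
    (μ : ℝ) (hμ : 0 < μ)
    (hfsc : StrongConvexWith μ (fun x : EuclideanSpace ℝ (Fin n) =>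
      (1 / (m : ℝ)) * ∑ k : Fin m, f k x)) :
    ∀ α : ℝ, 0 < α →
      ∃ c > 0, ∀ x : EuclideanSpace ℝ (Fin m × Fin n), c * ‖x‖ ^ 2 ≤ DGDG m n W f α x := by
  intro α hα
  have hm0 : (0:ℝ) < m := by exact_mod_cast Nat.lt_of_lt_of_le Nat.zero_lt_one hm
  have hm1 : (1:ℝ) ≤ m := by exact_mod_cast hm
  have hβ0 : (0:ℝ) < 1 - β := by linarith
  -- basic facts about the local quadratics
  have fk_nonneg : ∀ k (v : EuclideanSpace ℝ (Fin n)), 0 ≤ f k v := by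
    intro k v
    rw [hf]
    have := psd_quad_nonneg (A k) (hApsd k) v
    linarith
  have hfk0 : ∀ k, f k (0 : EuclideanSpace ℝ (Fin n)) = 0 := by
    intro k; rw [hf]; simp
  have hfk_smul : ∀ k (c : ℝ) (v : EuclideanSpace ℝ (Fin n)),
      f k (c • v) = c ^ 2 * f k v := by
    intro k c v
    rw [hf, hf]
    simp only [PiLp.smul_apply, smul_eq_mul]
    have hss : ∑ i, ∑ j, A k i j * (c * v i) * (c * v j)
        = c ^ 2 * ∑ i, ∑ j, A k i j * v i * v j := by
      rw [Finset.mul_sum]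
      refine Finset.sum_congr rfl fun i _ => ?_
      rw [Finset.mul_sum]
      exact Finset.sum_congr rfl fun j _ => by ring
    rw [hss]; ring
  -- strong convexity of the aggregate gives a quadratic lower bound
  have hagg : ∀ v : EuclideanSpace ℝ (Fin n),
      μ / 2 * ‖v‖ ^ 2 ≤ (1 / (m:ℝ)) * ∑ k, f k v := by
    intro v
    have hcx : ConvexOn ℝ Set.univ (fun w : EuclideanSpace ℝ (Fin n) =>
        (1 / (m:ℝ)) * ∑ k, f k w - μ / 2 * ‖w‖ ^ 2) := hfsc
    have h2 := hcx.2 (Set.mem_univ v) (Set.mem_univ (0 : EuclideanSpace ℝ (Fin n)))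
      (by norm_num : (0:ℝ) ≤ 1/2) (by norm_num : (0:ℝ) ≤ 1/2) (by norm_num)
    simp only [smul_zero, add_zero, smul_eq_mul, norm_zero] at h2
    have hhalf1 : ∑ k, f k ((1/2:ℝ) • v) = (1/4) * ∑ k, f k v := by
      rw [Finset.mul_sum]
      exact Finset.sum_congr rfl fun k _ => by rw [hfk_smul]; ring
    have hhalfn : ‖(1/2:ℝ) • v‖ ^ 2 = (1/4) * ‖v‖ ^ 2 := by
      rw [norm_smul, Real.norm_eq_abs, abs_of_pos (by norm_num : (0:ℝ) < 1/2)]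
      ring
    rw [hhalf1, hhalfn] at h2
    simp only [hfk0, Finset.sum_const, smul_zero, mul_zero] at h2
    ring_nf at h2 ⊢
    linarith [h2]
  -- constants
  set Ctot : ℝ := (1/2) * (∑ k, ∑ i, ∑ j, |A k i j|) + 1 with hCtot
  have hCsum : (0:ℝ) ≤ ∑ k, ∑ i, ∑ j, |A k i j| := by positivity
  have hCpos : 0 < Ctot := by rw [hCtot]; linarith
  set δ : ℝ := (1 - β) / (4 * α * Ctot) with hδdef
  have hδ : 0 < δ := by apply div_pos hβ0; positivity
  set ε : ℝ := 1 / (1 + δ) with hεdef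
  have hε0 : 0 < ε := by rw [hεdef]; positivity
  have hεinv : 1 / ε = 1 + δ := by
    rw [hεdef, one_div_one_div]
  have hε1 : ε < 1 := by
    rw [hεdef]
    rw [div_lt_one (by linarith)]; linarith
  have hδC : α * δ * Ctot = (1 - β) / 4 := by
    rw [hδdef]; field_simp
  set s : ℝ := Real.sqrt ε with hsdef
  have hspos : 0 < s := Real.sqrt_pos.mpr hε0
  have hs : s * s = ε := Real.mul_self_sqrt hε0.le
  set t : ℝ := 1 / s with htdef
  have hst : s * t = 1 := by rw [htdef]; field_simp
  have ht : t * t = 1 / ε := by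
    rw [htdef, ← hs]; field_simp
  -- the expansion inequality for each quadratic
  have hexp : ∀ k (a b : EuclideanSpace ℝ (Fin n)),
      (1 - ε) * f k a + (1 - 1/ε) * f k b ≤ f k (a + b) := by
    intro k a b
    have key : f k (a + b)
        = (1 - ε) * f k a + (1 - 1/ε) * f k b + f k (s • a + t • b) := by
      rw [hf, hf, hf, hf]
      simp only [PiLp.add_apply, PiLp.smul_apply, smul_eq_mul]
      have hsum : ∑ i, ∑ j, A k i j * (a i + b i) * (a j + b j)
          = ∑ i, ∑ j, ((1 - ε) * (A k i j * a i * a j)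
              + (1 - 1/ε) * (A k i j * b i * b j)
              + A k i j * (s * a i + t * b i) * (s * a j + t * b j)) := by
        refine Finset.sum_congr rfl fun i _ => Finset.sum_congr rfl fun j _ => ?_
        linear_combination (-(A k i j * a i * a j)) * hs
          + (-(A k i j * a i * b j + A k i j * b i * a j)) * hst
          + (-(A k i j * b i * b j)) * ht
      have hsplit : ∑ i, ∑ j, ((1 - ε) * (A k i j * a i * a j)
              + (1 - 1/ε) * (A k i j * b i * b j)
              + A k i j * (s * a i + t * b i) * (s * a j + t * b j))
          = (1 - ε) * (∑ i, ∑ j, A k i j * a i * a j)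
            + (1 - 1/ε) * (∑ i, ∑ j, A k i j * b i * b j)
            + ∑ i, ∑ j, A k i j * (s * a i + t * b i) * (s * a j + t * b j) := by
        simp [Finset.sum_add_distrib, Finset.mul_sum]
      rw [hsum, hsplit]; ring
    have hpos : 0 ≤ f k (s • a + t • b) := fk_nonneg _ _
    linarith
  -- choose the constant
  refine ⟨min (α * (1 - ε) * μ / (2 * m)) ((1 - β) / 4), ?_, ?_⟩
  · apply lt_min
    · exact div_pos (mul_pos (mul_pos hα (by linarith)) hμ) (by linarith)
    · linarith
  intro x
  set c : ℝ := min (α * (1 - ε) * μ / (2 * m)) ((1 - β) / 4) with hcdef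
  -- decompose x into average and disagreement parts
  obtain ⟨xbar, hxbar⟩ : ∃ v : EuclideanSpace ℝ (Fin n),
      ∀ i, v i = (1 / (m:ℝ)) * ∑ k : Fin m, x (k, i) :=
    ⟨WithLp.toLp 2 (fun i => (1 / (m:ℝ)) * ∑ k : Fin m, x (k, i)), fun i => rfl⟩
  obtain ⟨u, hu⟩ : ∃ w : EuclideanSpace ℝ (Fin m × Fin n),
      ∀ p : Fin m × Fin n, w p = x p - xbar p.2 :=
    ⟨WithLp.toLp 2 (fun p => x p - xbar p.2), fun p => rfl⟩
  have hx : ∀ p : Fin m × Fin n, x p = xbar p.2 + u p := by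
    intro p; rw [hu p]; ring
  obtain ⟨uvec, huvec⟩ : ∃ g : Fin m → EuclideanSpace ℝ (Fin n),
      ∀ k i, g k i = u (k, i) :=
    ⟨fun k => WithLp.toLp 2 (fun i => u (k, i)), fun k i => rfl⟩
  have hcolsum : ∀ i : Fin n, ∑ k : Fin m, u (k, i) = 0 := by
    intro i
    have : ∑ k : Fin m, u (k, i) = (∑ k : Fin m, x (k, i)) - m * xbar i := by
      calc ∑ k : Fin m, u (k, i) = ∑ k : Fin m, (x (k, i) - xbar i) :=
            Finset.sum_congr rfl fun k _ => hu (k, i)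
        _ = (∑ k : Fin m, x (k, i)) - m * xbar i := by
            rw [Finset.sum_sub_distrib, Finset.sum_const, Finset.card_univ,
              Fintype.card_fin, nsmul_eq_mul]
    rw [this, hxbar i]
    field_simp; ring
  set P : ℝ := ∑ i, xbar i ^ 2 with hPdef
  have hP : 0 ≤ P := by positivity
  have hU : 0 ≤ ‖u‖ ^ 2 := by positivity
  -- decomposition of the squared norm
  have hSx : ‖x‖ ^ 2 = m * P + ‖u‖ ^ 2 := by
    rw [eucl_norm_sq, eucl_norm_sq]
    rw [Fintype.sum_prod_type, Fintype.sum_prod_type]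
    have hi : ∀ i : Fin n, ∑ k : Fin m, x (k, i) ^ 2
        = (m:ℝ) * xbar i ^ 2 + ∑ k : Fin m, u (k, i) ^ 2 := by
      intro i
      have h0 := hcolsum i
      have e1 : ∑ k : Fin m, x (k, i) ^ 2
          = ∑ k : Fin m, (xbar i ^ 2 + 2 * xbar i * u (k, i) + u (k, i) ^ 2) :=
        Finset.sum_congr rfl fun k _ => by rw [hx (k, i)]; ring
      rw [e1, Finset.sum_add_distrib, Finset.sum_add_distrib, Finset.sum_const,
        Finset.card_univ, Fintype.card_fin, nsmul_eq_mul]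
      have e2 : ∑ k : Fin m, 2 * xbar i * u (k, i) = 0 := by
        rw [← Finset.mul_sum, h0, mul_zero]
      rw [e2]; ring
    calc ∑ k : Fin m, ∑ i, x (k, i) ^ 2 = ∑ i, ∑ k : Fin m, x (k, i) ^ 2 :=
          Finset.sum_comm
      _ = ∑ i, ((m:ℝ) * xbar i ^ 2 + ∑ k : Fin m, u (k, i) ^ 2) :=
          Finset.sum_congr rfl fun i _ => hi i
      _ = (m:ℝ) * P + ∑ i, ∑ k : Fin m, u (k, i) ^ 2 := by
          rw [Finset.sum_add_distrib, ← Finset.mul_sum, hPdef]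
      _ = (m:ℝ) * P + ∑ k : Fin m, ∑ i, u (k, i) ^ 2 := by rw [Finset.sum_comm]
  -- column sums of W
  have hWcol : ∀ j, ∑ k, W k j = 1 := by
    intro j
    calc ∑ k, W k j = ∑ k, W j k := Finset.sum_congr rfl fun k _ => hWsymm.apply j k
      _ = 1 := hWrow j
  -- decomposition of the W-quadratic term
  have hSW : ∑ k : Fin m, ∑ j : Fin m, W k j * ∑ i : Fin n, x (k, i) * x (j, i)
      = (m:ℝ) * P + ∑ k : Fin m, ∑ j : Fin m, W k j * ∑ i : Fin n, u (k, i) * u (j, i) := by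
    have hWi : ∀ i : Fin n,
        ∑ k : Fin m, ∑ j : Fin m, W k j * (x (k, i) * x (j, i))
          = (m:ℝ) * xbar i ^ 2
            + ∑ k : Fin m, ∑ j : Fin m, W k j * (u (k, i) * u (j, i)) := by
      intro i
      have h0 := hcolsum i
      have e1 : ∀ k j : Fin m, W k j * (x (k, i) * x (j, i))
          = W k j * xbar i ^ 2 + xbar i * (W k j * u (j, i))
            + xbar i * (W k j * u (k, i)) + W k j * (u (k, i) * u (j, i)) := by
        intro k j; rw [hx (k, i), hx (j, i)]; ring
      have t1 : ∑ k : Fin m, ∑ j : Fin m, W k j * xbar i ^ 2 = (m:ℝ) * xbar i ^ 2 := by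
        calc ∑ k : Fin m, ∑ j : Fin m, W k j * xbar i ^ 2
            = ∑ k : Fin m, (∑ j : Fin m, W k j) * xbar i ^ 2 := by
              exact Finset.sum_congr rfl fun k _ => (Finset.sum_mul ..).symm
          _ = ∑ k : Fin m, xbar i ^ 2 := by
              exact Finset.sum_congr rfl fun k _ => by rw [hWrow k, one_mul]
          _ = (m:ℝ) * xbar i ^ 2 := by
              rw [Finset.sum_const, Finset.card_univ, Fintype.card_fin, nsmul_eq_mul]
      have t2 : ∑ k : Fin m, ∑ j : Fin m, xbar i * (W k j * u (j, i)) = 0 := by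
        rw [Finset.sum_comm]
        have e : ∀ j : Fin m, ∑ k : Fin m, xbar i * (W k j * u (j, i))
            = xbar i * u (j, i) := by
          intro j
          calc ∑ k : Fin m, xbar i * (W k j * u (j, i))
              = (∑ k : Fin m, W k j) * (xbar i * u (j, i)) := by
                rw [Finset.sum_mul]
                exact Finset.sum_congr rfl fun k _ => by ring
            _ = xbar i * u (j, i) := by rw [hWcol j, one_mul]
        rw [Finset.sum_congr rfl fun j _ => e j, ← Finset.mul_sum, h0, mul_zero]
      have t3 : ∑ k : Fin m, ∑ j : Fin m, xbar i * (W k j * u (k, i)) = 0 := by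
        have e : ∀ k : Fin m, ∑ j : Fin m, xbar i * (W k j * u (k, i))
            = xbar i * u (k, i) := by
          intro k
          calc ∑ j : Fin m, xbar i * (W k j * u (k, i))
              = (∑ j : Fin m, W k j) * (xbar i * u (k, i)) := by
                rw [Finset.sum_mul]
                exact Finset.sum_congr rfl fun j _ => by ring
            _ = xbar i * u (k, i) := by rw [hWrow k, one_mul]
        rw [Finset.sum_congr rfl fun k _ => e k, ← Finset.mul_sum, h0, mul_zero]
      calc ∑ k : Fin m, ∑ j : Fin m, W k j * (x (k, i) * x (j, i))
          = ∑ k : Fin m, ∑ j : Fin m, (W k j * xbar i ^ 2 + xbar i * (W k j * u (j, i))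
              + xbar i * (W k j * u (k, i)) + W k j * (u (k, i) * u (j, i))) :=
            Finset.sum_congr rfl fun k _ => Finset.sum_congr rfl fun j _ => e1 k j
        _ = (∑ k : Fin m, ∑ j : Fin m, W k j * xbar i ^ 2)
            + (∑ k : Fin m, ∑ j : Fin m, xbar i * (W k j * u (j, i)))
            + (∑ k : Fin m, ∑ j : Fin m, xbar i * (W k j * u (k, i)))
            + ∑ k : Fin m, ∑ j : Fin m, W k j * (u (k, i) * u (j, i)) := by
            simp [Finset.sum_add_distrib]
        _ = (m:ℝ) * xbar i ^ 2 + ∑ k : Fin m, ∑ j : Fin m, W k j * (u (k, i) * u (j, i)) := by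
            rw [t1, t2, t3]; ring
    calc ∑ k : Fin m, ∑ j : Fin m, W k j * ∑ i : Fin n, x (k, i) * x (j, i)
        = ∑ k : Fin m, ∑ j : Fin m, ∑ i : Fin n, W k j * (x (k, i) * x (j, i)) := by
          exact Finset.sum_congr rfl fun k _ => Finset.sum_congr rfl fun j _ =>
            Finset.mul_sum ..
      _ = ∑ k : Fin m, ∑ i : Fin n, ∑ j : Fin m, W k j * (x (k, i) * x (j, i)) :=
          Finset.sum_congr rfl fun k _ => Finset.sum_comm
      _ = ∑ i : Fin n, ∑ k : Fin m, ∑ j : Fin m, W k j * (x (k, i) * x (j, i)) :=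
          Finset.sum_comm
      _ = ∑ i : Fin n, ((m:ℝ) * xbar i ^ 2
            + ∑ k : Fin m, ∑ j : Fin m, W k j * (u (k, i) * u (j, i))) :=
          Finset.sum_congr rfl fun i _ => hWi i
      _ = (m:ℝ) * P + ∑ i : Fin n, ∑ k : Fin m, ∑ j : Fin m, W k j * (u (k, i) * u (j, i)) := by
          rw [Finset.sum_add_distrib, ← Finset.mul_sum, hPdef]
      _ = (m:ℝ) * P + ∑ k : Fin m, ∑ i : Fin n, ∑ j : Fin m, W k j * (u (k, i) * u (j, i)) := by
          rw [Finset.sum_comm (f := fun i (k : Fin m) => ∑ j : Fin m, W k j * (u (k, i) * u (j, i)))]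
      _ = (m:ℝ) * P + ∑ k : Fin m, ∑ j : Fin m, ∑ i : Fin n, W k j * (u (k, i) * u (j, i)) := by
          rw [Finset.sum_congr rfl fun k _ => Finset.sum_comm]
      _ = (m:ℝ) * P + ∑ k : Fin m, ∑ j : Fin m, W k j * ∑ i : Fin n, u (k, i) * u (j, i) := by
          congr 1
          exact Finset.sum_congr rfl fun k _ => Finset.sum_congr rfl fun j _ =>
            (Finset.mul_sum ..).symm
  -- the quadratic penalty only sees the disagreement part
  have hquad : stackedQuad m n W x = stackedQuad m n W u := by
    simp only [stackedQuad]
    rw [hSx, hSW]; ring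
  have hquadlb : (1 - β) / 2 * ‖u‖ ^ 2 ≤ stackedQuad m n W u := by
    have := hβ u hcolsum
    linarith
  -- bound on the disagreement quadratics
  have habs : ∀ p : Fin m × Fin n, |u p| ≤ ‖u‖ := by
    intro p
    have h2 : u p ^ 2 ≤ ‖u‖ ^ 2 := by
      rw [eucl_norm_sq]
      exact Finset.single_le_sum (f := fun q => u q ^ 2) (fun q _ => sq_nonneg _)
        (Finset.mem_univ p)
    calc |u p| = Real.sqrt (u p ^ 2) := (Real.sqrt_sq_eq_abs _).symm
      _ ≤ Real.sqrt (‖u‖ ^ 2) := Real.sqrt_le_sqrt h2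
      _ = ‖u‖ := Real.sqrt_sq (norm_nonneg u)
  have huk_bound : ∑ k, f k (uvec k) ≤ Ctot * ‖u‖ ^ 2 := by
    have hk : ∀ k : Fin m, f k (uvec k)
        ≤ ((1/2) * ∑ i, ∑ j, |A k i j|) * ‖u‖ ^ 2 := by
      intro k
      rw [hf]
      have habsv : ∀ i : Fin n, |uvec k i| ≤ ‖u‖ := by
        intro i; rw [huvec]; exact habs _
      have hterm : ∀ i j : Fin n, A k i j * uvec k i * uvec k j
          ≤ |A k i j| * (‖u‖ * ‖u‖) := by
        intro i j
        calc A k i j * uvec k i * uvec k j ≤ |A k i j * uvec k i * uvec k j| :=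
              le_abs_self _
          _ = |A k i j| * (|uvec k i| * |uvec k j|) := by
              rw [abs_mul, abs_mul]; ring
          _ ≤ |A k i j| * (‖u‖ * ‖u‖) := by
              refine mul_le_mul_of_nonneg_left ?_ (abs_nonneg _)
              exact mul_le_mul (habsv _) (habsv _) (abs_nonneg _) (norm_nonneg _)
      have hsum : ∑ i, ∑ j, A k i j * uvec k i * uvec k j
          ≤ ∑ i, ∑ j, |A k i j| * (‖u‖ * ‖u‖) :=
        Finset.sum_le_sum fun i _ => Finset.sum_le_sum fun j _ => hterm i j
      have heq : ∑ i, ∑ j, |A k i j| * (‖u‖ * ‖u‖)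
          = (∑ i, ∑ j, |A k i j|) * (‖u‖ * ‖u‖) := by
        rw [Finset.sum_mul]
        exact Finset.sum_congr rfl fun i _ => (Finset.sum_mul ..).symm
      rw [heq, show ‖u‖ * ‖u‖ = ‖u‖ ^ 2 by ring] at hsum
      linarith [hsum]
    have hsum2 : ∑ k, f k (uvec k)
        ≤ ∑ k, ((1/2) * ∑ i, ∑ j, |A k i j|) * ‖u‖ ^ 2 :=
      Finset.sum_le_sum fun k _ => hk k
    have heq2 : ∑ k, ((1/2) * ∑ i, ∑ j, |A k i j|) * ‖u‖ ^ 2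
        = ((1/2) * ∑ k, ∑ i, ∑ j, |A k i j|) * ‖u‖ ^ 2 := by
      rw [← Finset.sum_mul, ← Finset.mul_sum]
    rw [heq2] at hsum2
    have : ((1/2) * ∑ k, ∑ i, ∑ j, |A k i j|) * ‖u‖ ^ 2 ≤ Ctot * ‖u‖ ^ 2 := by
      apply mul_le_mul_of_nonneg_right _ hU
      rw [hCtot]; linarith
    exact le_trans hsum2 this
  -- lower bound for the F-part
  have hxk : ∀ k : Fin m, WithLp.toLp 2 (fun i => x (k, i)) = xbar + uvec k := by
    intro k
    ext i
    rw [PiLp.toLp_apply]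
    have h1 : (xbar + uvec k) i = xbar i + uvec k i := rfl
    rw [h1, huvec, hx (k, i)]
  have hFsum : (1 - ε) * ∑ k, f k xbar + (1 - 1/ε) * ∑ k, f k (uvec k)
      ≤ ∑ k, f k (WithLp.toLp 2 (fun i => x (k, i))) := by
    have hgek : ∀ k : Fin m, (1 - ε) * f k xbar
        + (1 - 1/ε) * f k (uvec k) ≤ f k (WithLp.toLp 2 (fun i => x (k, i))) := by
      intro k
      have := hexp k xbar (uvec k)
      rw [← hxk k] at this
      exact this
    calc (1 - ε) * ∑ k, f k xbar + (1 - 1/ε) * ∑ k, f k (uvec k)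
        = ∑ k, ((1 - ε) * f k xbar + (1 - 1/ε) * f k (uvec k)) := by
          rw [Finset.sum_add_distrib, Finset.mul_sum, Finset.mul_sum]
      _ ≤ ∑ k, f k (WithLp.toLp 2 (fun i => x (k, i))) := Finset.sum_le_sum fun k _ => hgek k
  have hxbarP : ‖xbar‖ ^ 2 = P := by rw [eucl_norm_sq, hPdef]
  have haggx : μ / 2 * P ≤ (1 / (m:ℝ)) * ∑ k, f k xbar := by
    have := hagg xbar
    rwa [hxbarP] at this
  have hSu' : 0 ≤ ∑ k, f k (uvec k) :=
    Finset.sum_nonneg fun k _ => fk_nonneg k _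
  -- assemble the lower bound on α * stackedF
  have hF : α * (1 - ε) * (μ / 2) * P - (1 - β) / 4 * ‖u‖ ^ 2
      ≤ α * stackedF m n f x := by
    set Sb : ℝ := ∑ k, f k xbar with hSb
    set Su : ℝ := ∑ k, f k (uvec k) with hSu
    have hinvm0 : 0 < 1 / (m:ℝ) := by positivity
    have hinvm1 : 1 / (m:ℝ) ≤ 1 := by
      rw [div_le_one hm0]; exact hm1
    have hstep1 : (1/(m:ℝ)) * ((1 - ε) * Sb + (1 - 1/ε) * Su)
        ≤ stackedF m n f x := by
      unfold stackedF
      exact mul_le_mul_of_nonneg_left hFsum hinvm0.le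
    have hεlt : 1 - 1/ε ≤ 0 := by
      rw [hεinv]; linarith
    have hq : (1 - 1/ε) * Su ≤ 0 := mul_nonpos_of_nonpos_of_nonneg hεlt hSu'
    have hstep2 : (1 - 1/ε) * Su ≤ (1/(m:ℝ)) * ((1 - 1/ε) * Su) := by
      have h3 := mul_le_mul_of_nonpos_right hinvm1 hq
      linarith [h3]
    have hstep3 : (1 - 1/ε) * (Ctot * ‖u‖ ^ 2) ≤ (1 - 1/ε) * Su := by
      exact mul_le_mul_of_nonpos_left huk_bound hεlt
    have hstep4 : (1 - ε) * (μ / 2 * P) ≤ (1 - ε) * ((1/(m:ℝ)) * Sb) :=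
      mul_le_mul_of_nonneg_left haggx (by linarith)
    have hre : (1/(m:ℝ)) * ((1 - ε) * Sb + (1 - 1/ε) * Su)
        = (1 - ε) * ((1/(m:ℝ)) * Sb) + (1/(m:ℝ)) * ((1 - 1/ε) * Su) := by ring
    have hεδ : (1 - 1/ε) = -δ := by rw [hεinv]; ring
    have hchain : (1 - ε) * (μ / 2 * P) + (1 - 1/ε) * (Ctot * ‖u‖ ^ 2)
        ≤ stackedF m n f x := by
      rw [hre] at hstep1
      linarith
    have hmulα := mul_le_mul_of_nonneg_left hchain hα.le
    have hfin : α * ((1 - ε) * (μ / 2 * P) + (1 - 1/ε) * (Ctot * ‖u‖ ^ 2))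
        = α * (1 - ε) * (μ / 2) * P - (1 - β) / 4 * ‖u‖ ^ 2 := by
      rw [hεδ]
      linear_combination (-(‖u‖ ^ 2)) * hδC
    linarith [hmulα, hfin.ge, hfin.le]
  -- final assembly
  have hG : α * (1 - ε) * (μ / 2) * P + (1 - β) / 4 * ‖u‖ ^ 2 ≤ DGDG m n W f α x := by
    unfold DGDG
    rw [hquad]
    linarith
  have hc1 : c ≤ α * (1 - ε) * μ / (2 * m) := min_le_left _ _
  have hc2 : c ≤ (1 - β) / 4 := min_le_right _ _
  have hcmP : c * ((m:ℝ) * P) ≤ α * (1 - ε) * (μ / 2) * P := by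
    have h := mul_le_mul_of_nonneg_right hc1 (mul_nonneg hm0.le hP)
    have heq : α * (1 - ε) * μ / (2 * m) * ((m:ℝ) * P) = α * (1 - ε) * (μ / 2) * P := by
      field_simp
    linarith [h, heq.le, heq.ge]
  have hcU : c * ‖u‖ ^ 2 ≤ (1 - β) / 4 * ‖u‖ ^ 2 :=
    mul_le_mul_of_nonneg_right hc2 hU
  calc c * ‖x‖ ^ 2 = c * ((m:ℝ) * P) + c * ‖u‖ ^ 2 := by rw [hSx]; ring
    _ ≤ α * (1 - ε) * (μ / 2) * P + (1 - β) / 4 * ‖u‖ ^ 2 := by linarith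
    _ ≤ DGDG m n W f α x := hG
end
end

section
/- Assume each local cost is a quadratic form f_k(x) = (1/2) xᵀ A_k x with A_k an n×n symmetric matrix (not necessarily positive semidefinite), and assume the aggregate cost f(x) = (1/2m) xᵀ(Σ_{k=1}^m A_k) x is μ-strongly convex for some μ > 0. Then there exists α₀ > 0 such that for every α ∈ (0, α₀] the function G_α is strongly convex. -/
open Finset Set
open scoped RealInnerProductSpace

noncomputable section

namespace GalphaAux

set_option linter.unusedSectionVars false

variable {ι : Type*} [Fintype ι]

def QE (q : EuclideanSpace ℝ ι → ℝ) (B : EuclideanSpace ℝ ι → EuclideanSpace ℝ ι → ℝ) : Prop :=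
  ∀ (a b : ℝ) (x y : EuclideanSpace ℝ ι),
    q (a • x + b • y) = a ^ 2 * q x + 2 * (a * b) * B x y + b ^ 2 * q y

theorem QE.congr {q q' : EuclideanSpace ℝ ι → ℝ} {B} (h : QE q B) (he : ∀ x, q x = q' x) :
    QE q' B := by
  intro a b x y
  simp only [← he]
  exact h a b x y

theorem QE.add {q1 q2 : EuclideanSpace ℝ ι → ℝ} {B1 B2} (h1 : QE q1 B1) (h2 : QE q2 B2) :
    QE (fun x => q1 x + q2 x) (fun x y => B1 x y + B2 x y) := by
  intro a b x y
  simp only [h1 a b x y, h2 a b x y]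
  ring

theorem QE.sub {q1 q2 : EuclideanSpace ℝ ι → ℝ} {B1 B2} (h1 : QE q1 B1) (h2 : QE q2 B2) :
    QE (fun x => q1 x - q2 x) (fun x y => B1 x y - B2 x y) := by
  intro a b x y
  simp only [h1 a b x y, h2 a b x y]
  ring

theorem QE.const_mul {q : EuclideanSpace ℝ ι → ℝ} {B} (c : ℝ) (h : QE q B) :
    QE (fun x => c * q x) (fun x y => c * B x y) := by
  intro a b x y
  simp only [h a b x y]
  ring

theorem QE.sum {γ : Type*} (S : Finset γ) (q : γ → EuclideanSpace ℝ ι → ℝ)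
    (B : γ → EuclideanSpace ℝ ι → EuclideanSpace ℝ ι → ℝ)
    (h : ∀ s ∈ S, QE (q s) (B s)) :
    QE (fun x => ∑ s ∈ S, q s x) (fun x y => ∑ s ∈ S, B s x y) := by
  intro a b x y
  simp only []
  rw [Finset.sum_congr rfl (fun s hs => h s hs a b x y)]
  simp only [Finset.sum_add_distrib, Finset.mul_sum]

theorem QE.coord (p r : ι) :
    QE (fun x : EuclideanSpace ℝ ι => x p * x r)
      (fun x y => (x p * y r + y p * x r) / 2) := by
  intro a b x y
  simp only [PiLp.add_apply, PiLp.smul_apply, smul_eq_mul]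
  ring

theorem normsq_eq (x : EuclideanSpace ℝ ι) : ‖x‖ ^ 2 = ∑ p, x p * x p := by
  rw [EuclideanSpace.norm_eq, Real.sq_sqrt (by positivity)]
  simp [Real.norm_eq_abs, sq_abs, pow_two]

theorem QE.normSq :
    QE (fun x : EuclideanSpace ℝ ι => ‖x‖ ^ 2)
      (fun x y => ∑ p, (x p * y p + y p * x p) / 2) :=
  (QE.sum Finset.univ (fun p (x : EuclideanSpace ℝ ι) => x p * x p) _
    (fun p _ => QE.coord p p)).congr (fun x => (normsq_eq x).symm)

theorem convexOn_of_QE {q : EuclideanSpace ℝ ι → ℝ} {B} (h : QE q B) (hpos : ∀ x, 0 ≤ q x) :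
    ConvexOn ℝ Set.univ q := by
  refine ⟨convex_univ, ?_⟩
  intro x _ y _ a b ha hb hab
  have h1 := h a b x y
  have h2 := h 1 (-1) x y
  have h3 := hpos ((1 : ℝ) • x + (-1 : ℝ) • y)
  rw [h2] at h3
  norm_num at h3
  have h4 : 0 ≤ q x - 2 * B x y + q y := by linarith
  simp only [smul_eq_mul]
  rw [h1]
  have hb1 : b = 1 - a := by linarith
  subst hb1
  nlinarith [mul_nonneg (mul_nonneg ha hb) h4]

theorem absmul_le_half (a b U V t : ℝ) (ht : 0 < t) (ha : a * a ≤ U) (hb : b * b ≤ V) :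
    |a * b| ≤ (U / t + t * V) / 2 := by
  have key : 2 * t * |a * b| ≤ U + t ^ 2 * V := by
    rcases abs_cases (a * b) with ⟨h, _⟩ | ⟨h, _⟩ <;> rw [h] <;>
      nlinarith [sq_nonneg (a - t * b), sq_nonneg (a + t * b)]
  have h2 : |a * b| ≤ (U + t ^ 2 * V) / (2 * t) := by
    rw [le_div_iff₀ (by positivity)]
    linarith
  have h3 : (U + t ^ 2 * V) / (2 * t) = (U / t + t * V) / 2 := by
    field_simp
  linarith [h2, h3.le]

theorem absmul_le_same (a b U : ℝ) (ha : a * a ≤ U) (hb : b * b ≤ U) : |a * b| ≤ U := by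
  rcases abs_cases (a * b) with ⟨h, _⟩ | ⟨h, _⟩ <;> rw [h] <;>
    nlinarith [sq_nonneg (a - b), sq_nonneg (a + b)]

theorem perterm (c a a' b b' U V t : ℝ) (ht : 0 < t)
    (ha : a * a ≤ U) (ha' : a' * a' ≤ U) (hb : b * b ≤ V) (hb' : b' * b' ≤ V) :
    c * b * b' - |c| * ((U / t + t * V) + U) ≤ c * (a + b) * (a' + b') := by
  have h1 : |a * b'| ≤ (U / t + t * V) / 2 := absmul_le_half a b' U V t ht ha hb'
  have h2 : |b * a'| ≤ (U / t + t * V) / 2 := by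
    have := absmul_le_half a' b U V t ht ha' hb
    rwa [mul_comm] at this
  have h3 : |a * a'| ≤ U := absmul_le_same a a' U ha ha'
  have habs : |a * a' + a * b' + b * a'| ≤ (U / t + t * V) + U := by
    calc |a * a' + a * b' + b * a'| ≤ |a * a' + a * b'| + |b * a'| := abs_add_le _ _
      _ ≤ |a * a'| + |a * b'| + |b * a'| := by linarith [abs_add_le (a * a') (a * b')]
      _ ≤ (U / t + t * V) + U := by linarith
  have hge : -( |c| * ((U / t + t * V) + U)) ≤ c * (a * a' + a * b' + b * a') := by
    have h5 : |c * (a * a' + a * b' + b * a')| ≤ |c| * ((U / t + t * V) + U) := by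
      rw [abs_mul]
      exact mul_le_mul_of_nonneg_left habs (abs_nonneg c)
    linarith [neg_abs_le (c * (a * a' + a * b' + b * a'))]
  nlinarith [hge]

end GalphaAux

set_option maxHeartbeats 1000000 in
/-- If each `f_k(x) = (1/2)xᵀA_k x` with `A_k` symmetric (not necessarily
positive semidefinite) and the aggregate cost `f` is `μ`-strongly convex, then there exists
`α₀ > 0` such that `G_α` is strongly convex for every `α ∈ (0, α₀]`. -/
theorem Galpha_strongly_convex_of_quadratics_small_stepsize {m n : ℕ} (hm : 1 ≤ m) (hn : 1 ≤ n)
    (W : Matrix (Fin m) (Fin m) ℝ)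
    (hWsymm : W.IsSymm)
    (hWnonneg : ∀ i j, 0 ≤ W i j)
    (hWrow : ∀ i, ∑ j, W i j = 1)
    (hWdiag : ∀ i, 0 < W i i)
    (β : ℝ) (hβlt : β < 1)
    (hβ : ∀ u : EuclideanSpace ℝ (Fin m × Fin n),
      (∀ i : Fin n, ∑ k : Fin m, u (k, i) = 0) →
      (1 - β) * ‖u‖ ^ 2 ≤ 2 * stackedQuad m n W u)
    (A : Fin m → Matrix (Fin n) (Fin n) ℝ)
    (hAsymm : ∀ k, (A k).IsSymm)
    (f : Fin m → EuclideanSpace ℝ (Fin n) → ℝ)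
    (hf : ∀ k, ∀ x : EuclideanSpace ℝ (Fin n),
      f k x = (1 / 2) * ∑ i : Fin n, ∑ j : Fin n, A k i j * x i * x j)
    (μ : ℝ) (hμ : 0 < μ)
    (hfsc : StrongConvexWith μ (fun x : EuclideanSpace ℝ (Fin n) =>
      (1 / (m : ℝ)) * ∑ k : Fin m, f k x)) :
    ∃ α₀ > 0, ∀ α : ℝ, 0 < α → α ≤ α₀ →
      ∃ c > 0, StrongConvexWith c (DGDG m n W f α) := by
  classical
  have hm0 : (0:ℝ) < (m:ℝ) := by exact_mod_cast Nat.lt_of_lt_of_le Nat.zero_lt_one hm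
  have hm1 : (1:ℝ) ≤ (m:ℝ) := by exact_mod_cast hm
  have hmne : (m:ℝ) ≠ 0 := ne_of_gt hm0
  set L : ℝ := 1 + ∑ k, ∑ i, ∑ j, |A k i j| with hLdef
  have habsnn : (0:ℝ) ≤ ∑ k, ∑ i, ∑ j, |A k i j| := by positivity
  have hL1 : (1:ℝ) ≤ L := by rw [hLdef]; linarith
  have hLpos : (0:ℝ) < L := lt_of_lt_of_le one_pos hL1
  have hβ0 : (0:ℝ) < 1 - β := by linarith
  set D : ℝ := L^2/μ + L/2 + μ/8 with hDdef
  have hDpos : 0 < D := by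
    have h1 : 0 < L^2/μ := div_pos (pow_pos hLpos 2) hμ
    have h2 : 0 < L/2 := by linarith
    have h3 : 0 < μ/8 := by linarith
    rw [hDdef]; linarith
  refine ⟨(1-β)/(2*D), div_pos hβ0 (by linarith), ?_⟩
  intro α hα hα0
  refine ⟨α*μ/(4*(m:ℝ)), by positivity, ?_⟩
  set c : ℝ := α*μ/(4*(m:ℝ)) with hcdef
  -- existence of the bilinear companion
  obtain ⟨B, hB⟩ : ∃ B, GalphaAux.QE (fun x : EuclideanSpace ℝ (Fin m × Fin n) =>
      DGDG m n W f α x - c / 2 * ‖x‖ ^ 2) B := by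
    refine ⟨_, GalphaAux.QE.congr (GalphaAux.QE.sub (GalphaAux.QE.add
      (GalphaAux.QE.const_mul α (GalphaAux.QE.const_mul (1/(m:ℝ))
        (GalphaAux.QE.sum Finset.univ _ _ (fun k _ =>
          GalphaAux.QE.const_mul (1/2) (GalphaAux.QE.sum Finset.univ _ _ (fun i _ =>
            GalphaAux.QE.sum Finset.univ _ _ (fun j _ =>
              GalphaAux.QE.const_mul (A k i j) (GalphaAux.QE.coord (k,i) (k,j)))))))))
      (GalphaAux.QE.const_mul (1/2) (GalphaAux.QE.sub GalphaAux.QE.normSq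
        (GalphaAux.QE.sum Finset.univ _ _ (fun k _ =>
          GalphaAux.QE.sum Finset.univ _ _ (fun j _ =>
            GalphaAux.QE.const_mul (W k j) (GalphaAux.QE.sum Finset.univ _ _ (fun i _ =>
              GalphaAux.QE.coord (k,i) (j,i)))))))))
      (GalphaAux.QE.const_mul (c/2) GalphaAux.QE.normSq)) ?_⟩
    intro x
    simp only [DGDG, stackedF, stackedQuad, hf, PiLp.toLp_apply, mul_assoc]
  have hpos : ∀ x : EuclideanSpace ℝ (Fin m × Fin n),
      0 ≤ DGDG m n W f α x - c / 2 * ‖x‖ ^ 2 := by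
    intro x
    set v : EuclideanSpace ℝ (Fin n) := WithLp.toLp 2 (fun i => (1/(m:ℝ)) * ∑ k, x (k, i)) with hvdef
    set s : EuclideanSpace ℝ (Fin m × Fin n) := WithLp.toLp 2 (fun p => v p.2) with hsdef
    set u : EuclideanSpace ℝ (Fin m × Fin n) := x - s with hudef
    have hxp : ∀ p : Fin m × Fin n, x p = u p + v p.2 := by
      intro p
      simp [hudef, hsdef]
    have hu0 : ∀ i : Fin n, ∑ k, u (k, i) = 0 := by
      intro i
      have h1 : ∀ k : Fin m, u (k, i) = x (k, i) - v i := by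
        intro k; simp [hudef, hsdef]
      rw [Finset.sum_congr rfl (fun k _ => h1 k), Finset.sum_sub_distrib]
      simp only [hvdef, PiLp.toLp_apply, Finset.sum_const, Finset.card_univ, Fintype.card_fin, nsmul_eq_mul]
      field_simp
      ring
    set U2 : ℝ := ∑ p : Fin m × Fin n, u p * u p with hU2def
    set V : ℝ := ∑ i, v i * v i with hVdef
    have hU2nn : 0 ≤ U2 := Finset.sum_nonneg fun p _ => mul_self_nonneg _
    have hVnn : 0 ≤ V := Finset.sum_nonneg fun i _ => mul_self_nonneg _
    have hnormu : ‖u‖ ^ 2 = U2 := GalphaAux.normsq_eq u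
    have horth : ∑ k, ∑ i, u (k, i) * v i = 0 := by
      rw [Finset.sum_comm]
      refine Finset.sum_eq_zero fun i _ => ?_
      rw [← Finset.sum_mul, hu0 i, zero_mul]
    have hsq : ∑ p : Fin m × Fin n, x p * x p = U2 + (m:ℝ) * V := by
      have h1 : ∀ p : Fin m × Fin n, x p * x p
          = u p * u p + (2 * (u p * v p.2) + v p.2 * v p.2) := by
        intro p; rw [hxp p]; ring
      rw [Finset.sum_congr rfl fun p _ => h1 p]
      simp only [Finset.sum_add_distrib]
      have h2 : ∑ p : Fin m × Fin n, u p * v p.2 = 0 := by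
        rw [Fintype.sum_prod_type]; exact horth
      have h3 : ∑ p : Fin m × Fin n, v p.2 * v p.2 = (m:ℝ) * V := by
        rw [Fintype.sum_prod_type]
        simp [Finset.sum_const, Finset.card_univ, ← hVdef]
      rw [← Finset.mul_sum, h2, h3, mul_zero]
      ring
    have hWcol : ∀ j, ∑ k, W k j = 1 := by
      intro j
      have hsym : ∀ k, W k j = W j k := fun k => (Matrix.IsSymm.apply hWsymm j k)
      rw [Finset.sum_congr rfl fun k _ => hsym k]
      exact hWrow j
    have hinner : ∀ (k j : Fin m), ∑ i, x (k,i) * x (j,i)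
        = (∑ i, u (k,i) * u (j,i)) + ((∑ i, u (k,i) * v i) + (∑ i, v i * u (j,i)) + V) := by
      intro k j
      have h1 : ∀ i, x (k,i) * x (j,i)
          = u (k,i) * u (j,i) + (u (k,i) * v i + (v i * u (j,i) + v i * v i)) := by
        intro i
        rw [hxp (k,i), hxp (j,i)]; ring
      rw [Finset.sum_congr rfl fun i _ => h1 i]
      simp only [Finset.sum_add_distrib]
      rw [← hVdef]
      ring
    have hWx : ∑ k, ∑ j, W k j * ∑ i, x (k,i) * x (j,i)
        = (∑ k, ∑ j, W k j * ∑ i, u (k,i) * u (j,i)) + (m:ℝ) * V := by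
      have e1 : ∑ k, ∑ j, W k j * (∑ i, u (k,i) * v i) = 0 := by
        have h : ∀ k, ∑ j, W k j * (∑ i, u (k,i) * v i) = ∑ i, u (k,i) * v i := by
          intro k; rw [← Finset.sum_mul, hWrow k, one_mul]
        rw [Finset.sum_congr rfl fun k _ => h k]; exact horth
      have e2 : ∑ k, ∑ j, W k j * (∑ i, v i * u (j,i)) = 0 := by
        rw [Finset.sum_comm]
        have h : ∀ j, ∑ k, W k j * (∑ i, v i * u (j,i)) = ∑ i, v i * u (j,i) := by
          intro j; rw [← Finset.sum_mul, hWcol j, one_mul]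
        rw [Finset.sum_congr rfl fun j _ => h j,
          Finset.sum_congr rfl fun j _ =>
            Finset.sum_congr rfl fun i _ => mul_comm (v i) (u (j,i))]
        exact horth
      have e3 : ∑ k : Fin m, ∑ j : Fin m, W k j * V = (m:ℝ) * V := by
        have h : ∀ k, ∑ j, W k j * V = V := by
          intro k; rw [← Finset.sum_mul, hWrow k, one_mul]
        rw [Finset.sum_congr rfl fun k _ => h k]
        simp [Finset.sum_const, Finset.card_univ, nsmul_eq_mul]
      calc ∑ k, ∑ j, W k j * ∑ i, x (k,i) * x (j,i)
          = ∑ k, ∑ j, (W k j * (∑ i, u (k,i) * u (j,i))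
            + (W k j * (∑ i, u (k,i) * v i) + (W k j * (∑ i, v i * u (j,i)) + W k j * V))) := by
            refine Finset.sum_congr rfl fun k _ => Finset.sum_congr rfl fun j _ => ?_
            rw [hinner k j]; ring
        _ = (∑ k, ∑ j, W k j * ∑ i, u (k,i) * u (j,i)) + (m:ℝ) * V := by
            simp only [Finset.sum_add_distrib]
            rw [e1, e2, e3]; ring
    have hQx : stackedQuad m n W x = stackedQuad m n W u := by
      simp only [stackedQuad]
      rw [GalphaAux.normsq_eq x, GalphaAux.normsq_eq u, hsq, hWx, ← hU2def]
      ring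
    -- strong convexity of the aggregate
    have hfvzero : ∀ k : Fin m, f k (0 : EuclideanSpace ℝ (Fin n)) = 0 := by
      intro k; simp [hf]
    have hfhalf : ∀ k : Fin m, f k ((1/2 : ℝ) • v) = (1/4) * f k v := by
      intro k
      rw [hf, hf]
      simp only [PiLp.smul_apply, smul_eq_mul, Finset.mul_sum]
      refine Finset.sum_congr rfl fun i _ => ?_
      refine Finset.sum_congr rfl fun j _ => ?_
      ring
    have hnormv : ‖v‖ ^ 2 = V := GalphaAux.normsq_eq v
    have hfv : μ/2 * V ≤ (1/(m:ℝ)) * ∑ k, f k v := by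
      have hcv := hfsc.2 (Set.mem_univ v) (Set.mem_univ (0 : EuclideanSpace ℝ (Fin n)))
        (by norm_num : (0:ℝ) ≤ 1/2) (by norm_num : (0:ℝ) ≤ 1/2) (by norm_num)
      simp only [smul_zero, add_zero, smul_eq_mul, norm_zero] at hcv
      have hnh : ‖(1/2 : ℝ) • v‖ ^ 2 = (1/4) * ‖v‖ ^ 2 := by
        rw [norm_smul]
        simp [Real.norm_eq_abs]
        ring
      rw [hnh] at hcv
      simp only [hfhalf, hfvzero, Finset.sum_const, smul_zero, mul_zero, sub_zero, add_zero,
        mul_zero] at hcv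
      rw [← Finset.mul_sum] at hcv
      rw [hnormv] at hcv
      have h0 : ((0:ℝ) ^ 2 : ℝ) = 0 := by norm_num
      linarith [hcv]
    -- lower bound for stackedF
    set t : ℝ := μ/(2*L) with htdef
    have ht : 0 < t := div_pos hμ (by linarith)
    have hMnn : 0 ≤ (U2/t + t*V) + U2 := by
      have h1 : 0 ≤ U2/t := div_nonneg hU2nn ht.le
      have h2 : 0 ≤ t*V := mul_nonneg ht.le hVnn
      linarith
    have hu2 : ∀ p : Fin m × Fin n, u p * u p ≤ U2 := fun p =>
      Finset.single_le_sum (f := fun p => u p * u p) (fun q _ => mul_self_nonneg _)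
        (Finset.mem_univ p)
    have hv2 : ∀ i, v i * v i ≤ V := fun i =>
      Finset.single_le_sum (f := fun i => v i * v i) (fun q _ => mul_self_nonneg _)
        (Finset.mem_univ i)
    have hterm : ∀ (k : Fin m) (i j : Fin n),
        A k i j * v i * v j - |A k i j| * ((U2/t + t*V) + U2)
          ≤ A k i j * x (k,i) * x (k,j) := by
      intro k i j
      rw [hxp (k,i), hxp (k,j)]
      exact GalphaAux.perterm (A k i j) (u (k,i)) (u (k,j)) (v i) (v j) U2 V t ht
        (hu2 (k,i)) (hu2 (k,j)) (hv2 i) (hv2 j)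
    have hsumA : ∑ k, ∑ i, ∑ j, (A k i j * v i * v j - |A k i j| * ((U2/t + t*V) + U2))
        ≤ ∑ k, ∑ i, ∑ j, A k i j * x (k,i) * x (k,j) :=
      Finset.sum_le_sum fun k _ => Finset.sum_le_sum fun i _ =>
        Finset.sum_le_sum fun j _ => hterm k i j
    have hsplit : ∑ k, ∑ i, ∑ j, (A k i j * v i * v j - |A k i j| * ((U2/t + t*V) + U2))
        = (∑ k, ∑ i, ∑ j, A k i j * v i * v j)
          - (∑ k, ∑ i, ∑ j, |A k i j|) * ((U2/t + t*V) + U2) := by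
      simp only [Finset.sum_sub_distrib, Finset.sum_mul]
    have hAvv : (∑ k, ∑ i, ∑ j, A k i j * v i * v j) = 2 * ∑ k, f k v := by
      rw [Finset.mul_sum]
      refine Finset.sum_congr rfl fun k _ => ?_
      rw [hf k v]
      ring
    have hFx : stackedF m n f x
        = (1/(2*(m:ℝ))) * ∑ k, ∑ i, ∑ j, A k i j * x (k,i) * x (k,j) := by
      simp only [stackedF, hf, PiLp.toLp_apply]
      rw [← Finset.mul_sum]
      ring
    have habsA : (∑ k, ∑ i, ∑ j, |A k i j|) * ((U2/t + t*V) + U2)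
        ≤ L * ((U2/t + t*V) + U2) := by
      apply mul_le_mul_of_nonneg_right _ hMnn
      rw [hLdef]; linarith
    have hFlb : μ/2 * V - (L * ((U2/t + t*V) + U2))/2 ≤ stackedF m n f x := by
      rw [hFx]
      have h1 : 2 * ∑ k, f k v - L * ((U2/t + t*V) + U2)
          ≤ ∑ k, ∑ i, ∑ j, A k i j * x (k,i) * x (k,j) := by
        rw [← hAvv]
        linarith [hsumA, hsplit.ge, habsA]
      have h3 : (1/(2*(m:ℝ))) * (2 * ∑ k, f k v - L * ((U2/t + t*V) + U2))
          ≤ (1/(2*(m:ℝ))) * ∑ k, ∑ i, ∑ j, A k i j * x (k,i) * x (k,j) := by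
        apply mul_le_mul_of_nonneg_left h1
        positivity
      have h4 : (1/(2*(m:ℝ))) * (2 * ∑ k, f k v - L * ((U2/t + t*V) + U2))
          = (1/(m:ℝ)) * ∑ k, f k v - (1/(2*(m:ℝ))) * (L * ((U2/t + t*V) + U2)) := by
        field_simp
      have h5 : (1/(2*(m:ℝ))) * (L * ((U2/t + t*V) + U2)) ≤ (1/2) * (L * ((U2/t + t*V) + U2)) := by
        apply mul_le_mul_of_nonneg_right _ (mul_nonneg hLpos.le hMnn)
        rw [div_le_div_iff₀ (by linarith) (by norm_num)]
        linarith
      linarith [h3, hfv]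
    -- quadratic penalty lower bound
    have hquadlb : (1-β)/2 * U2 ≤ stackedQuad m n W u := by
      have h := hβ u hu0
      rw [hnormu] at h
      linarith
    -- final assembly
    have hDG : DGDG m n W f α x = α * stackedF m n f x + stackedQuad m n W u := by
      rw [DGDG, hQx]
    have hnx : ‖x‖ ^ 2 = U2 + (m:ℝ) * V := by
      rw [GalphaAux.normsq_eq x, hsq]
    rw [hDG, hnx]
    have hFstep : α * (μ/2*V - (L * ((U2/t + t*V) + U2))/2) ≤ α * stackedF m n f x :=
      mul_le_mul_of_nonneg_left hFlb hα.le
    have hLM : α * ((L * ((U2/t + t*V) + U2))/2)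
        = α*L^2/μ*U2 + α*μ/4*V + α*L/2*U2 := by
      rw [htdef]
      field_simp
      ring
    have hcm : c/2*((m:ℝ)*V) = α*μ/8*V := by
      rw [hcdef]
      field_simp
      ring
    have hαD : α * D ≤ (1-β)/2 := by
      have h := mul_le_mul_of_nonneg_right hα0 hDpos.le
      have h2 : (1-β)/(2*D)*D = (1-β)/2 := by
        field_simp
      linarith [h, h2.le]
    have hDexp : α * D = α*L^2/μ + α*L/2 + α*μ/8 := by
      rw [hDdef]; ring
    have hc2 : c/2 ≤ α*μ/8 := by
      rw [hcdef, div_div]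
      apply div_le_div_of_nonneg_left (by positivity) (by norm_num) (by linarith)
    have p1 : (c/2)*U2 ≤ (α*μ/8)*U2 := mul_le_mul_of_nonneg_right hc2 hU2nn
    have p2 : (α*L^2/μ + α*L/2 + α*μ/8)*U2 ≤ ((1-β)/2)*U2 :=
      mul_le_mul_of_nonneg_right (by linarith [hαD, hDexp.ge]) hU2nn
    have p3 : 0 ≤ (α*μ/8)*V := mul_nonneg (by positivity) hVnn
    linarith [hFstep, hquadlb, p1, p2, p3, hLM, hcm]
  exact GalphaAux.convexOn_of_QE hB hpos
end
end
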